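/- arXiv:1202.5908 — 2 statements merged into one kernel-verified Lean document; each statement's English description precedes it below -/
import Mathlib

section
/- Let τ = [x_{i−1},x_i]×[y_{j−1},y_j] be an axis-parallel rectangle with side lengths h_x = x_i − x_{i−1}, h_y = y_j − y_{j−1} and center (x_τ, y_τ) = ((x_{i−1}+x_i)/2, (y_{j−1}+y_j)/2). Let g ∈ C³(τ), let g^I be the bilinear interpolant of g on τ, and let w be any bilinear function on τ. Then ∫_τ (g − g^I)_y w_y dx dy = ∫_τ g_{xxy} F_τ(x) ( w_y − (2/3)(x − x_τ) w_{xy} ) dx dy, where F_τ(x) = ((x − x_τ)² − h_x²/4)/2. -/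
open MeasureTheory Real Set

noncomputable section

/-- First-order partial derivative in the x-direction. -/
def pdx (f : ℝ × ℝ → ℝ) : ℝ × ℝ → ℝ := fun p => fderiv ℝ f p (1, 0)

/-- First-order partial derivative in the y-direction. -/
def pdy (f : ℝ × ℝ → ℝ) : ℝ × ℝ → ℝ := fun p => fderiv ℝ f p (0, 1)

/-- Mixed partial derivative `∂_x^i ∂_y^j`. -/
def pd (i j : ℕ) (f : ℝ × ℝ → ℝ) : ℝ × ℝ → ℝ := pdx^[i] (pdy^[j] f)

/-- A function is globally a bilinear polynomial `a + bx + cy + dxy`. -/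
def IsBilinear (f : ℝ × ℝ → ℝ) : Prop :=
  ∃ a b c d : ℝ, ∀ p : ℝ × ℝ, f p = a + b * p.1 + c * p.2 + d * (p.1 * p.2)

open intervalIntegral
lemma hasDerivAt_sliceX (f : ℝ × ℝ → ℝ) {x y : ℝ} (hf : DifferentiableAt ℝ f (x, y)) :
    HasDerivAt (fun t => f (t, y)) (pdx f (x, y)) x := by
  have h1 : HasDerivAt (fun t : ℝ => (t, y)) ((1 : ℝ), (0 : ℝ)) x :=
    (hasDerivAt_id x).prodMk (hasDerivAt_const x y)
  exact hf.hasFDerivAt.comp_hasDerivAt x h1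

lemma hasDerivAt_sliceY (f : ℝ × ℝ → ℝ) {x y : ℝ} (hf : DifferentiableAt ℝ f (x, y)) :
    HasDerivAt (fun t => f (x, t)) (pdy f (x, y)) y := by
  have h1 : HasDerivAt (fun t : ℝ => (x, t)) ((0 : ℝ), (1 : ℝ)) y :=
    (hasDerivAt_const y x).prodMk (hasDerivAt_id y)
  exact hf.hasFDerivAt.comp_hasDerivAt y h1

lemma bilin_contDiff (a b c d : ℝ) {n : ℕ∞} :
    ContDiff ℝ n (fun p : ℝ × ℝ => a + b * p.1 + c * p.2 + d * (p.1 * p.2)) := by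
  fun_prop

lemma pdy_bilin (a b c d : ℝ) (f : ℝ × ℝ → ℝ)
    (hf : ∀ p : ℝ × ℝ, f p = a + b * p.1 + c * p.2 + d * (p.1 * p.2)) (p : ℝ × ℝ) :
    pdy f p = c + d * p.1 := by
  obtain ⟨x, y⟩ := p
  have hfe : f = fun p : ℝ × ℝ => a + b * p.1 + c * p.2 + d * (p.1 * p.2) := funext hf
  have hdiff : DifferentiableAt ℝ f (x, y) := by
    rw [hfe]; exact ((bilin_contDiff a b c d (n := 1)).differentiable (by norm_num)).differentiableAt
  have h1 : HasDerivAt (fun t => f (x, t)) (pdy f (x, y)) y := hasDerivAt_sliceY f hdiff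
  have h2 : HasDerivAt (fun t : ℝ => a + b * x + c * t + d * (x * t)) (c + d * x) y := by
    have := ((hasDerivAt_const y (a + b * x)).add ((hasDerivAt_id y).const_mul c)).add
      (((hasDerivAt_id y).const_mul x).const_mul d)
    exact this.congr_deriv (by ring)
  have h1' : HasDerivAt (fun t : ℝ => a + b * x + c * t + d * (x * t)) (pdy f (x, y)) y := by
    simpa [hfe] using h1
  exact h1'.unique h2

lemma pdx_bilin (a b c d : ℝ) (f : ℝ × ℝ → ℝ)
    (hf : ∀ p : ℝ × ℝ, f p = a + b * p.1 + c * p.2 + d * (p.1 * p.2)) (p : ℝ × ℝ) :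
    pdx f p = b + d * p.2 := by
  obtain ⟨x, y⟩ := p
  have hfe : f = fun p : ℝ × ℝ => a + b * p.1 + c * p.2 + d * (p.1 * p.2) := funext hf
  have hdiff : DifferentiableAt ℝ f (x, y) := by
    rw [hfe]; exact ((bilin_contDiff a b c d (n := 1)).differentiable (by norm_num)).differentiableAt
  have h1 : HasDerivAt (fun t => f (t, y)) (pdx f (x, y)) x := hasDerivAt_sliceX f hdiff
  have h2 : HasDerivAt (fun t : ℝ => a + b * t + c * y + d * (t * y)) (b + d * y) x := by
    have := (((hasDerivAt_const x a).add ((hasDerivAt_id x).const_mul b)).add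
      (hasDerivAt_const x (c * y))).add (((hasDerivAt_id x).mul_const y).const_mul d)
    exact this.congr_deriv (by ring)
  have h1' : HasDerivAt (fun t : ℝ => a + b * t + c * y + d * (t * y)) (pdx f (x, y)) x := by
    simpa [hfe] using h1
  exact h1'.unique h2
lemma contDiff_pdx {n : ℕ} {f : ℝ × ℝ → ℝ} (hf : ContDiff ℝ (n + 1 : ℕ) f) :
    ContDiff ℝ (n : ℕ) (pdx f) := by
  have h : ContDiff ℝ (n : ℕ) (fderiv ℝ f) := hf.fderiv_right (by exact_mod_cast le_rfl)
  exact h.clm_apply contDiff_const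

lemma contDiff_pdy {n : ℕ} {f : ℝ × ℝ → ℝ} (hf : ContDiff ℝ (n + 1 : ℕ) f) :
    ContDiff ℝ (n : ℕ) (pdy f) := by
  have h : ContDiff ℝ (n : ℕ) (fderiv ℝ f) := hf.fderiv_right (by exact_mod_cast le_rfl)
  exact h.clm_apply contDiff_const

lemma pd_comm {f : ℝ × ℝ → ℝ} (hf : ContDiff ℝ 2 f) (p : ℝ × ℝ) :
    pdx (pdy f) p = pdy (pdx f) p := by
  have hdf : Differentiable ℝ f := hf.differentiable (by norm_num)
  have hd2 : DifferentiableAt ℝ (fderiv ℝ f) p := by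
    have : ContDiff ℝ (1 : ℕ) (fderiv ℝ f) := hf.fderiv_right (by norm_num)
    exact (this.differentiable (by norm_num)).differentiableAt
  have hsym : IsSymmSndFDerivAt ℝ f p := hf.contDiffAt.isSymmSndFDerivAt (by norm_num)
  have e1 : pdx (pdy f) p = fderiv ℝ (fderiv ℝ f) p (1, 0) (0, 1) := by
    show fderiv ℝ (fun q => fderiv ℝ f q (0, 1)) p (1, 0) = _
    rw [fderiv_clm_apply hd2 (differentiableAt_const _)]
    simp
  have e2 : pdy (pdx f) p = fderiv ℝ (fderiv ℝ f) p (0, 1) (1, 0) := by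
    show fderiv ℝ (fun q => fderiv ℝ f q (1, 0)) p (0, 1) = _
    rw [fderiv_clm_apply hd2 (differentiableAt_const _)]
    simp
  rw [e1, e2, hsym (1, 0) (0, 1)]

lemma L1 (x0 x1 c d : ℝ) (ψ ψ' ψ'' : ℝ → ℝ)
    (hψ : ∀ x, HasDerivAt ψ (ψ' x) x) (hψ' : ∀ x, HasDerivAt ψ' (ψ'' x) x)
    (hc2 : Continuous ψ'') :
    ∫ x in x0..x1, ψ x * (c + d * x)
      = ((x1 - x0) / 2) * (ψ x1 * (c + d * x1) + ψ x0 * (c + d * x0))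
        + ∫ x in x0..x1,
            (((x - (x0 + x1) / 2) ^ 2 - (x1 - x0) ^ 2 / 4) / 2) *
              (ψ'' x * (c + d * x) + 2 * ψ' x * d) := by
  have hcψ : Continuous ψ := Differentiable.continuous fun x => (hψ x).differentiableAt
  have hcψ' : Continuous ψ' := Differentiable.continuous fun x => (hψ' x).differentiableAt
  set m := (x0 + x1) / 2 with hm
  set F : ℝ → ℝ := fun x => ((x - m) ^ 2 - (x1 - x0) ^ 2 / 4) / 2 with hF
  have hcF : Continuous F := by rw [hF]; fun_prop
  set Φ : ℝ → ℝ := fun x =>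
    (x - m) * (ψ x * (c + d * x)) - F x * (ψ' x * (c + d * x) + ψ x * d) with hΦdef
  have hΦ : ∀ x, HasDerivAt Φ
      (ψ x * (c + d * x) - F x * (ψ'' x * (c + d * x) + 2 * ψ' x * d)) x := by
    intro x
    have hL : HasDerivAt (fun x : ℝ => c + d * x) d x := by
      simpa using ((hasDerivAt_id x).const_mul d).const_add c
    have hxm : HasDerivAt (fun x : ℝ => x - m) 1 x := (hasDerivAt_id x).sub_const m
    have hψL : HasDerivAt (fun x => ψ x * (c + d * x))
        (ψ' x * (c + d * x) + ψ x * d) x := (hψ x).mul hL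
    have h1 : HasDerivAt (fun x => (x - m) * (ψ x * (c + d * x)))
        (1 * (ψ x * (c + d * x)) + (x - m) * (ψ' x * (c + d * x) + ψ x * d)) x :=
      hxm.mul hψL
    have hFd : HasDerivAt F (x - m) x := by
      have := ((hxm.pow 2).sub_const ((x1 - x0) ^ 2 / 4)).div_const 2
      rw [hF]; exact this.congr_deriv (by norm_num)
    have h2i : HasDerivAt (fun x => ψ' x * (c + d * x) + ψ x * d)
        (ψ'' x * (c + d * x) + ψ' x * d + ψ' x * d) x :=
      ((hψ' x).mul hL).add ((hψ x).mul_const d)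
    have h2 := hFd.mul h2i
    have := h1.sub h2
    exact this.congr_deriv (by ring)
  have hint : IntervalIntegrable
      (fun x => ψ x * (c + d * x) - F x * (ψ'' x * (c + d * x) + 2 * ψ' x * d))
      volume x0 x1 := by
    apply Continuous.intervalIntegrable; fun_prop
  have key := integral_eq_sub_of_hasDerivAt (fun x _ => hΦ x) hint
  have hi1 : IntervalIntegrable (fun x => ψ x * (c + d * x)) volume x0 x1 := by
    apply Continuous.intervalIntegrable; fun_prop
  have hi2 : IntervalIntegrable
      (fun x => F x * (ψ'' x * (c + d * x) + 2 * ψ' x * d)) volume x0 x1 := by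
    apply Continuous.intervalIntegrable; fun_prop
  rw [integral_sub hi1 hi2] at key
  have hend : Φ x1 - Φ x0
      = ((x1 - x0) / 2) * (ψ x1 * (c + d * x1) + ψ x0 * (c + d * x0)) := by
    rw [hΦdef]; simp only [hF, hm]; ring
  have : ∫ x in x0..x1, ψ x * (c + d * x)
      = ((x1 - x0) / 2) * (ψ x1 * (c + d * x1) + ψ x0 * (c + d * x0))
        + ∫ x in x0..x1, F x * (ψ'' x * (c + d * x) + 2 * ψ' x * d) := by
    rw [← hend]; linarith [key]
  simpa [hF, hm] using this

lemma L2 (x0 x1 : ℝ) (ψ ψ' ψ'' : ℝ → ℝ)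
    (hψ : ∀ x, HasDerivAt ψ (ψ' x) x) (hψ' : ∀ x, HasDerivAt ψ' (ψ'' x) x)
    (hc2 : Continuous ψ'') (h0 : ψ x0 = 0) (h1 : ψ x1 = 0) :
    ∫ x in x0..x1, (((x - (x0 + x1) / 2) ^ 2 - (x1 - x0) ^ 2 / 4) / 2) * ψ' x
      = -(1 / 3) * ∫ x in x0..x1,
          (((x - (x0 + x1) / 2) ^ 2 - (x1 - x0) ^ 2 / 4) / 2) * (x - (x0 + x1) / 2) * ψ'' x := by
  have hcψ : Continuous ψ := Differentiable.continuous fun x => (hψ x).differentiableAt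
  have hcψ' : Continuous ψ' := Differentiable.continuous fun x => (hψ' x).differentiableAt
  set m := (x0 + x1) / 2 with hm
  set F : ℝ → ℝ := fun x => ((x - m) ^ 2 - (x1 - x0) ^ 2 / 4) / 2 with hF
  have hcF : Continuous F := by rw [hF]; fun_prop
  set Φ : ℝ → ℝ := fun x =>
    (1 / 3) * (F x * ((x - m) * ψ' x)) - ((x1 - x0) ^ 2 / 12) * ψ x with hΦdef
  have hΦ : ∀ x, HasDerivAt Φ
      (F x * ψ' x + (1 / 3) * (F x * (x - m) * ψ'' x)) x := by
    intro x
    have hxm : HasDerivAt (fun x : ℝ => x - m) 1 x := (hasDerivAt_id x).sub_const m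
    have hFd : HasDerivAt F (x - m) x := by
      have := ((hxm.pow 2).sub_const ((x1 - x0) ^ 2 / 4)).div_const 2
      rw [hF]; exact this.congr_deriv (by norm_num)
    have h1 : HasDerivAt (fun x => (1 / 3) * (F x * ((x - m) * ψ' x)))
        ((1 / 3) * ((x - m) * ((x - m) * ψ' x) + F x * (1 * ψ' x + (x - m) * ψ'' x))) x :=
      (hFd.mul (hxm.mul (hψ' x))).const_mul (1 / 3)
    have h2 : HasDerivAt (fun x => ((x1 - x0) ^ 2 / 12) * ψ x)
        (((x1 - x0) ^ 2 / 12) * ψ' x) x := (hψ x).const_mul _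
    have := h1.sub h2
    exact this.congr_deriv (by ring)
  have key := integral_eq_sub_of_hasDerivAt (fun x (_ : x ∈ Set.uIcc x0 x1) => hΦ x)
    (by apply Continuous.intervalIntegrable; fun_prop)
  have hzero : Φ x1 - Φ x0 = 0 := by
    rw [hΦdef]; simp only [hF, h0, h1, hm]; ring
  have hi1 : IntervalIntegrable (fun x => F x * ψ' x) volume x0 x1 := by
    apply Continuous.intervalIntegrable; fun_prop
  have hi2 : IntervalIntegrable (fun x => (1 / 3) * (F x * (x - m) * ψ'' x)) volume x0 x1 := by
    apply Continuous.intervalIntegrable; fun_prop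
  rw [hzero, integral_add hi1 hi2, intervalIntegral.integral_const_mul] at key
  have : ∫ x in x0..x1, F x * ψ' x
      = -(1 / 3) * ∫ x in x0..x1, F x * (x - m) * ψ'' x := by linarith
  simpa [hF, hm] using this

lemma integrableOn_rect {x0 x1 y0 y1 : ℝ} (f : ℝ × ℝ → ℝ) (hf : Continuous f) :
    Integrable f ((volume.restrict (Icc x0 x1)).prod (volume.restrict (Icc y0 y1))) := by
  rw [Measure.prod_restrict]
  exact hf.continuousOn.integrableOn_compact (isCompact_Icc.prod isCompact_Icc)

lemma iterated_xy {x0 x1 y0 y1 : ℝ} (hx : x0 ≤ x1) (hy : y0 ≤ y1)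
    (f : ℝ × ℝ → ℝ) (hf : Continuous f) :
    ∫ p in Icc x0 x1 ×ˢ Icc y0 y1, f p
      = ∫ x in x0..x1, ∫ y in y0..y1, f (x, y) := by
  have hI := integrableOn_rect (x0 := x0) (x1 := x1) (y0 := y0) (y1 := y1) f hf
  have h1 : ∫ p in Icc x0 x1 ×ˢ Icc y0 y1, f p
      = ∫ x in Icc x0 x1, ∫ y in Icc y0 y1, f (x, y) := by
    rw [Measure.volume_eq_prod, ← Measure.prod_restrict]
    exact integral_prod f hI
  rw [h1]
  rw [show (fun x => ∫ y in Icc y0 y1, f (x, y)) = fun x => ∫ y in y0..y1, f (x, y) from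
    funext fun x => by rw [intervalIntegral.integral_of_le hy, integral_Icc_eq_integral_Ioc]]
  rw [intervalIntegral.integral_of_le hx, integral_Icc_eq_integral_Ioc]

lemma iterated_yx {x0 x1 y0 y1 : ℝ} (hx : x0 ≤ x1) (hy : y0 ≤ y1)
    (f : ℝ × ℝ → ℝ) (hf : Continuous f) :
    ∫ p in Icc x0 x1 ×ˢ Icc y0 y1, f p
      = ∫ y in y0..y1, ∫ x in x0..x1, f (x, y) := by
  have hI := integrableOn_rect (x0 := x0) (x1 := x1) (y0 := y0) (y1 := y1) f hf
  have h1 : ∫ p in Icc x0 x1 ×ˢ Icc y0 y1, f p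
      = ∫ y in Icc y0 y1, ∫ x in Icc x0 x1, f (x, y) := by
    rw [Measure.volume_eq_prod, ← Measure.prod_restrict]
    exact integral_prod_symm f hI
  rw [h1]
  rw [show (fun y => ∫ x in Icc x0 x1, f (x, y)) = fun y => ∫ x in x0..x1, f (x, y) from
    funext fun y => by rw [intervalIntegral.integral_of_le hx, integral_Icc_eq_integral_Ioc]]
  rw [intervalIntegral.integral_of_le hy, integral_Icc_eq_integral_Ioc]

lemma swap_iterated {x0 x1 y0 y1 : ℝ} (hx : x0 ≤ x1) (hy : y0 ≤ y1)
    (f : ℝ × ℝ → ℝ) (hf : Continuous f) :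
    ∫ y in y0..y1, ∫ x in x0..x1, f (x, y)
      = ∫ x in x0..x1, ∫ y in y0..y1, f (x, y) := by
  rw [← iterated_xy hx hy f hf, ← iterated_yx hx hy f hf]

lemma hasDerivAt_affine (u v t : ℝ) : HasDerivAt (fun s : ℝ => u + v * s) v t := by
  simpa using ((hasDerivAt_id t).const_mul v).const_add u

lemma hasDerivAt_bilinX (aI bI cI dI Y t : ℝ) :
    HasDerivAt (fun s : ℝ => aI + bI * s + cI * Y + dI * (s * Y)) (bI + dI * Y) t := by
  have := (((hasDerivAt_const t aI).add ((hasDerivAt_id t).const_mul bI)).add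
    (hasDerivAt_const t (cI * Y))).add (((hasDerivAt_id t).mul_const Y).const_mul dI)
  exact this.congr_deriv (by ring)

lemma hasDerivAt_bilinY (aI bI cI dI X t : ℝ) :
    HasDerivAt (fun s : ℝ => aI + bI * X + cI * s + dI * (X * s)) (cI + dI * X) t := by
  have := ((hasDerivAt_const t (aI + bI * X)).add ((hasDerivAt_id t).const_mul cI)).add
    (((hasDerivAt_id t).const_mul X).const_mul dI)
  exact this.congr_deriv (by ring)

-- quick test: does fun_prop use local continuity hypotheses?
example (G : ℝ × ℝ → ℝ) (hG : Continuous G) (c d : ℝ) :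
    Continuous fun q : ℝ × ℝ => G (q.2, q.1) * (c + d * q.2) := by fun_prop


/-- Lin identity (b): for `g ∈ C³(τ)` with bilinear interpolant `g^I` on the rectangle
`τ = [x₀,x₁]×[y₀,y₁]` and any bilinear `w`,
`∫_τ (g−g^I)_y w_y = ∫_τ g_{xxy} F_τ(x) (w_y − (2/3)(x−x_τ) w_{xy})`,
where `F_τ(x) = ((x−x_τ)² − h_x²/4)/2`. -/
theorem lin_identity_b (x0 x1 y0 y1 : ℝ) (hx : x0 < x1) (hy : y0 < y1)
    (g gI w : ℝ × ℝ → ℝ) (hg : ContDiff ℝ 3 g)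
    (hgIbil : IsBilinear gI)
    (h00 : gI (x0, y0) = g (x0, y0)) (h10 : gI (x1, y0) = g (x1, y0))
    (h01 : gI (x0, y1) = g (x0, y1)) (h11 : gI (x1, y1) = g (x1, y1))
    (hwbil : IsBilinear w) :
    ∫ p in Icc x0 x1 ×ˢ Icc y0 y1, pdy (fun q => g q - gI q) p * pdy w p
      = ∫ p in Icc x0 x1 ×ˢ Icc y0 y1,
          pd 2 1 g p * (((p.1 - (x0 + x1) / 2) ^ 2 - (x1 - x0) ^ 2 / 4) / 2) *
            (pdy w p - 2 / 3 * (p.1 - (x0 + x1) / 2) * pd 1 1 w p) := by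
  obtain ⟨aI, bI, cI, dI, hgI⟩ := hgIbil
  obtain ⟨a, b, c, d, hw⟩ := hwbil
  have hx' : x0 ≤ x1 := hx.le
  have hy' : y0 ≤ y1 := hy.le
  -- smoothness bookkeeping
  have hg3 : ContDiff ℝ (2 + 1 : ℕ) g := by exact_mod_cast hg
  set G := pdy g with hGdef
  have hG : ContDiff ℝ (2 : ℕ) G := contDiff_pdy hg3
  set Gx := pdx G with hGxdef
  have hG' : ContDiff ℝ (1 + 1 : ℕ) G := by exact_mod_cast hG
  have hGx : ContDiff ℝ (1 : ℕ) Gx := contDiff_pdx hG'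
  set Gxx := pdx Gx with hGxxdef
  have hGx' : ContDiff ℝ (0 + 1 : ℕ) Gx := by exact_mod_cast hGx
  have hGxx : ContDiff ℝ (0 : ℕ) Gxx := contDiff_pdx hGx'
  set Px := pdx g with hPxdef
  have hPx : ContDiff ℝ (2 : ℕ) Px := contDiff_pdx hg3
  set Pxx := pdx Px with hPxxdef
  have hPx' : ContDiff ℝ (1 + 1 : ℕ) Px := by exact_mod_cast hPx
  have hPxx : ContDiff ℝ (1 : ℕ) Pxx := contDiff_pdx hPx'
  have hGc : Continuous G := hG.continuous
  have hGxc : Continuous Gx := hGx.continuous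
  have hGxxc : Continuous Gxx := hGxx.continuous
  have hPxc : Continuous Px := hPx.continuous
  have hPxxc : Continuous Pxx := hPxx.continuous
  have hgd : ∀ p : ℝ × ℝ, DifferentiableAt ℝ g p := fun p =>
    (hg.differentiable (by norm_num)).differentiableAt
  have hGd : ∀ p : ℝ × ℝ, DifferentiableAt ℝ G p := fun p =>
    (hG.differentiable (by norm_num)).differentiableAt
  have hGxd : ∀ p : ℝ × ℝ, DifferentiableAt ℝ Gx p := fun p =>
    (hGx.differentiable (by norm_num)).differentiableAt
  have hPxd : ∀ p : ℝ × ℝ, DifferentiableAt ℝ Px p := fun p =>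
    (hPx.differentiable (by norm_num)).differentiableAt
  have hPxxd : ∀ p : ℝ × ℝ, DifferentiableAt ℝ Pxx p := fun p =>
    (hPxx.differentiable (by norm_num)).differentiableAt
  -- commutation of partials
  have hg2 : ContDiff ℝ 2 g := hg.of_le (by norm_num)
  have hcomm1 : ∀ p : ℝ × ℝ, pdy Px p = Gx p := fun p => (pd_comm hg2 p).symm
  have hPx2 : ContDiff ℝ 2 Px := by exact_mod_cast hPx
  have hcomm2 : ∀ p : ℝ × ℝ, pdy Pxx p = Gxx p := by
    intro p
    have h1 : pdy Pxx p = pdx (pdy Px) p := (pd_comm hPx2 p).symm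
    have h2 : pdy Px = Gx := funext hcomm1
    rw [h1, h2]
  -- bilinear partials
  have hwy : ∀ p : ℝ × ℝ, pdy w p = c + d * p.1 := pdy_bilin a b c d w hw
  have hw11 : ∀ p : ℝ × ℝ, pd 1 1 w p = d := by
    intro p
    have h := pdx_bilin c d 0 0 (pdy w) (fun q => by rw [hwy q]; ring) p
    simpa [pd] using h
  have hgIy : ∀ p : ℝ × ℝ, pdy gI p = cI + dI * p.1 := pdy_bilin aI bI cI dI gI hgI
  have hpd21 : ∀ p : ℝ × ℝ, pd 2 1 g p = Gxx p := fun p => rfl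
  -- LHS integrand
  have hgId : ∀ p : ℝ × ℝ, DifferentiableAt ℝ gI p := by
    intro p
    have hE : gI = fun p : ℝ × ℝ => aI + bI * p.1 + cI * p.2 + dI * (p.1 * p.2) := funext hgI
    rw [hE]
    exact ((bilin_contDiff aI bI cI dI (n := 1)).differentiable (by norm_num)).differentiableAt
  have hey : ∀ p : ℝ × ℝ, pdy (fun q => g q - gI q) p = G p - (cI + dI * p.1) := by
    intro p
    have h1 : fderiv ℝ (fun q => g q - gI q) p = fderiv ℝ g p - fderiv ℝ gI p :=
      fderiv_sub (hgd p) (hgId p)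
    show fderiv ℝ (fun q => g q - gI q) p (0, 1) = _
    rw [h1, ContinuousLinearMap.sub_apply,
      show fderiv ℝ gI p (0, 1) = pdy gI p from rfl, hgIy p]
    rfl
  -- rewrite both sides
  simp only [hey, hwy, hpd21, hw11]
  -- Step A : double integration by parts in x, for each y
  have stepA : ∀ y : ℝ,
      (∫ x in x0..x1, (G (x, y) - (cI + dI * x)) * (c + d * x))
        = ((x1 - x0) / 2) * ((G (x1, y) - (cI + dI * x1)) * (c + d * x1)
              + (G (x0, y) - (cI + dI * x0)) * (c + d * x0))
          + ∫ x in x0..x1,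
              (((x - (x0 + x1) / 2) ^ 2 - (x1 - x0) ^ 2 / 4) / 2) *
                (Gxx (x, y) * (c + d * x) + 2 * (Gx (x, y) - dI) * d) := by
    intro y
    have hψ : ∀ t : ℝ, HasDerivAt (fun s => G (s, y) - (cI + dI * s)) (Gx (t, y) - dI) t := by
      intro t
      exact (hasDerivAt_sliceX G (hGd (t, y))).sub (hasDerivAt_affine cI dI t)
    have hψ' : ∀ t : ℝ, HasDerivAt (fun s => Gx (s, y) - dI) (Gxx (t, y)) t := fun t =>
      (hasDerivAt_sliceX Gx (hGxd (t, y))).sub_const dI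
    have hcont : Continuous fun t : ℝ => Gxx (t, y) := by fun_prop
    exact L1 x0 x1 c d _ _ _ hψ hψ' hcont
  -- edge FTC in y
  have hIedge : ∀ X : ℝ, gI (X, y0) = g (X, y0) → gI (X, y1) = g (X, y1) →
      (∫ t in y0..y1, (G (X, t) - (cI + dI * X))) = 0 := by
    intro X hc0 hc1
    have hd : ∀ t : ℝ, HasDerivAt (fun s => g (X, s) - (aI + bI * X + cI * s + dI * (X * s)))
        (G (X, t) - (cI + dI * X)) t := fun t =>
      (hasDerivAt_sliceY g (hgd (X, t))).sub (hasDerivAt_bilinY aI bI cI dI X t)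
    have hint : IntervalIntegrable (fun t => G (X, t) - (cI + dI * X)) volume y0 y1 := by
      apply Continuous.intervalIntegrable; fun_prop
    rw [integral_eq_sub_of_hasDerivAt (fun t _ => hd t) hint]
    have e1 : g (X, y1) - (aI + bI * X + cI * y1 + dI * (X * y1)) = 0 := by
      rw [← hgI (X, y1), hc1, sub_self]
    have e0 : g (X, y0) - (aI + bI * X + cI * y0 + dI * (X * y0)) = 0 := by
      rw [← hgI (X, y0), hc0, sub_self]
    rw [e1, e0, sub_zero]
  -- parametric continuity helper uses
  have contParam : ∀ (f : ℝ → ℝ → ℝ), Continuous (fun q : ℝ × ℝ => f q.1 q.2) →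
      Continuous fun y => ∫ x in x0..x1, f y x := by
    intro f hf
    exact continuous_parametric_intervalIntegral_of_continuous' hf x0 x1
  -- boundary term vanishes
  have hbdry : (∫ y in y0..y1, (((x1 - x0) / 2) *
      ((G (x1, y) - (cI + dI * x1)) * (c + d * x1)
        + (G (x0, y) - (cI + dI * x0)) * (c + d * x0)))) = 0 := by
    have hre : (fun y => ((x1 - x0) / 2) *
        ((G (x1, y) - (cI + dI * x1)) * (c + d * x1)
          + (G (x0, y) - (cI + dI * x0)) * (c + d * x0)))
        = fun y => ((x1 - x0) / 2 * (c + d * x1)) * (G (x1, y) - (cI + dI * x1))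
            + ((x1 - x0) / 2 * (c + d * x0)) * (G (x0, y) - (cI + dI * x0)) :=
      funext fun y => by ring
    rw [hre, intervalIntegral.integral_add (by apply Continuous.intervalIntegrable; fun_prop)
      (by apply Continuous.intervalIntegrable; fun_prop),
      intervalIntegral.integral_const_mul, intervalIntegral.integral_const_mul, hIedge x1 h10 h11, hIedge x0 h00 h01]
    ring
  -- FTC in y for Gx - dI
  have hyint : ∀ x : ℝ, (∫ y in y0..y1,
      2 * d * ((((x - (x0 + x1) / 2) ^ 2 - (x1 - x0) ^ 2 / 4) / 2) * (Gx (x, y) - dI)))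
      = (2 * d) * ((((x - (x0 + x1) / 2) ^ 2 - (x1 - x0) ^ 2 / 4) / 2) *
          ((Px (x, y1) - (bI + dI * y1)) - (Px (x, y0) - (bI + dI * y0)))) := by
    intro x
    rw [show (fun y => 2 * d * ((((x - (x0 + x1) / 2) ^ 2 - (x1 - x0) ^ 2 / 4) / 2) *
          (Gx (x, y) - dI)))
        = fun y => (2 * d * (((x - (x0 + x1) / 2) ^ 2 - (x1 - x0) ^ 2 / 4) / 2)) *
          (Gx (x, y) - dI) from funext fun y => by ring, intervalIntegral.integral_const_mul]
    have hd : ∀ t : ℝ, HasDerivAt (fun s => Px (x, s) - (bI + dI * s)) (Gx (x, t) - dI) t := by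
      intro t
      have h3 := (hasDerivAt_sliceY Px (hPxd (x, t))).sub (hasDerivAt_affine bI dI t)
      rw [hcomm1 (x, t)] at h3; exact h3
    rw [integral_eq_sub_of_hasDerivAt (fun t _ => hd t)
      (by apply Continuous.intervalIntegrable; fun_prop)]
    ring
  -- L2 application on horizontal edges
  have hL2app : ∀ Y : ℝ, gI (x0, Y) = g (x0, Y) → gI (x1, Y) = g (x1, Y) →
      (∫ x in x0..x1, (((x - (x0 + x1) / 2) ^ 2 - (x1 - x0) ^ 2 / 4) / 2) *
          (Px (x, Y) - (bI + dI * Y)))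
        = -(1 / 3) * ∫ x in x0..x1,
            (((x - (x0 + x1) / 2) ^ 2 - (x1 - x0) ^ 2 / 4) / 2) * (x - (x0 + x1) / 2) *
              Pxx (x, Y) := by
    intro Y hc0 hc1
    have hψ : ∀ t : ℝ, HasDerivAt (fun s => g (s, Y) - (aI + bI * s + cI * Y + dI * (s * Y)))
        (Px (t, Y) - (bI + dI * Y)) t := fun t =>
      (hasDerivAt_sliceX g (hgd (t, Y))).sub (hasDerivAt_bilinX aI bI cI dI Y t)
    have hψ' : ∀ t : ℝ, HasDerivAt (fun s => Px (s, Y) - (bI + dI * Y)) (Pxx (t, Y)) t :=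
      fun t => (hasDerivAt_sliceX Px (hPxd (t, Y))).sub_const _
    have h0 : g (x0, Y) - (aI + bI * x0 + cI * Y + dI * (x0 * Y)) = 0 := by
      rw [← hgI (x0, Y), hc0, sub_self]
    have h1' : g (x1, Y) - (aI + bI * x1 + cI * Y + dI * (x1 * Y)) = 0 := by
      rw [← hgI (x1, Y), hc1, sub_self]
    exact L2 x0 x1 _ _ _ hψ hψ' (by fun_prop) h0 h1'
  -- FTC in y for Pxx
  have hftc3 : ∀ x : ℝ, (∫ t in y0..y1, Gxx (x, t)) = Pxx (x, y1) - Pxx (x, y0) := by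
    intro x
    have hd : ∀ t : ℝ, HasDerivAt (fun s => Pxx (x, s)) (Gxx (x, t)) t := by
      intro t
      have h := hasDerivAt_sliceY Pxx (hPxxd (x, t))
      rw [hcomm2 (x, t)] at h; exact h
    exact integral_eq_sub_of_hasDerivAt (fun t _ => hd t)
      (by apply Continuous.intervalIntegrable; fun_prop)
  -- the T3 chain
  have hT3 : (∫ y in y0..y1, ∫ x in x0..x1,
      2 * d * ((((x - (x0 + x1) / 2) ^ 2 - (x1 - x0) ^ 2 / 4) / 2) * (Gx (x, y) - dI)))
      = ∫ y in y0..y1, ∫ x in x0..x1,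
          (-(2 * d) / 3) * ((((x - (x0 + x1) / 2) ^ 2 - (x1 - x0) ^ 2 / 4) / 2) *
            ((x - (x0 + x1) / 2) * Gxx (x, y))) := by
    have i1 : IntervalIntegrable (fun x => (((x - (x0 + x1) / 2) ^ 2 - (x1 - x0) ^ 2 / 4) / 2) *
        (Px (x, y1) - (bI + dI * y1))) volume x0 x1 := by
      apply Continuous.intervalIntegrable; fun_prop
    have i0 : IntervalIntegrable (fun x => (((x - (x0 + x1) / 2) ^ 2 - (x1 - x0) ^ 2 / 4) / 2) *
        (Px (x, y0) - (bI + dI * y0))) volume x0 x1 := by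
      apply Continuous.intervalIntegrable; fun_prop
    have i3 : IntervalIntegrable (fun x => (((x - (x0 + x1) / 2) ^ 2 - (x1 - x0) ^ 2 / 4) / 2) *
        (x - (x0 + x1) / 2) * Pxx (x, y1)) volume x0 x1 := by
      apply Continuous.intervalIntegrable; fun_prop
    have i4 : IntervalIntegrable (fun x => (((x - (x0 + x1) / 2) ^ 2 - (x1 - x0) ^ 2 / 4) / 2) *
        (x - (x0 + x1) / 2) * Pxx (x, y0)) volume x0 x1 := by
      apply Continuous.intervalIntegrable; fun_prop
    calc ∫ y in y0..y1, ∫ x in x0..x1,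
        2 * d * ((((x - (x0 + x1) / 2) ^ 2 - (x1 - x0) ^ 2 / 4) / 2) * (Gx (x, y) - dI))
        = ∫ x in x0..x1, ∫ y in y0..y1,
            2 * d * ((((x - (x0 + x1) / 2) ^ 2 - (x1 - x0) ^ 2 / 4) / 2) * (Gx (x, y) - dI)) :=
          swap_iterated hx' hy'
            (fun p => 2 * d * ((((p.1 - (x0 + x1) / 2) ^ 2 - (x1 - x0) ^ 2 / 4) / 2) *
              (Gx p - dI))) (by fun_prop)
      _ = ∫ x in x0..x1, (2 * d) * ((((x - (x0 + x1) / 2) ^ 2 - (x1 - x0) ^ 2 / 4) / 2) *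
            ((Px (x, y1) - (bI + dI * y1)) - (Px (x, y0) - (bI + dI * y0)))) :=
          intervalIntegral.integral_congr fun x _ => hyint x
      _ = (2 * d) * ((∫ x in x0..x1, (((x - (x0 + x1) / 2) ^ 2 - (x1 - x0) ^ 2 / 4) / 2) *
              (Px (x, y1) - (bI + dI * y1)))
            - ∫ x in x0..x1, (((x - (x0 + x1) / 2) ^ 2 - (x1 - x0) ^ 2 / 4) / 2) *
              (Px (x, y0) - (bI + dI * y0))) := by
          rw [← intervalIntegral.integral_sub i1 i0, ← intervalIntegral.integral_const_mul]
          exact intervalIntegral.integral_congr fun x _ => by ring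
      _ = (2 * d) * ((-(1 / 3) * ∫ x in x0..x1,
              (((x - (x0 + x1) / 2) ^ 2 - (x1 - x0) ^ 2 / 4) / 2) * (x - (x0 + x1) / 2) *
                Pxx (x, y1))
            - (-(1 / 3) * ∫ x in x0..x1,
              (((x - (x0 + x1) / 2) ^ 2 - (x1 - x0) ^ 2 / 4) / 2) * (x - (x0 + x1) / 2) *
                Pxx (x, y0))) := by
          rw [hL2app y1 h01 h11, hL2app y0 h00 h10]
      _ = (-(2 * d) / 3) * ∫ x in x0..x1,
            (((x - (x0 + x1) / 2) ^ 2 - (x1 - x0) ^ 2 / 4) / 2) * (x - (x0 + x1) / 2) *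
              (Pxx (x, y1) - Pxx (x, y0)) := by
          rw [show (∫ x in x0..x1,
              (((x - (x0 + x1) / 2) ^ 2 - (x1 - x0) ^ 2 / 4) / 2) * (x - (x0 + x1) / 2) *
                (Pxx (x, y1) - Pxx (x, y0)))
              = (∫ x in x0..x1, (((x - (x0 + x1) / 2) ^ 2 - (x1 - x0) ^ 2 / 4) / 2) *
                  (x - (x0 + x1) / 2) * Pxx (x, y1))
                - ∫ x in x0..x1, (((x - (x0 + x1) / 2) ^ 2 - (x1 - x0) ^ 2 / 4) / 2) *
                  (x - (x0 + x1) / 2) * Pxx (x, y0) from by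
            rw [← intervalIntegral.integral_sub i3 i4]; exact intervalIntegral.integral_congr fun x _ => by ring]
          ring
      _ = (-(2 * d) / 3) * ∫ x in x0..x1,
            (((x - (x0 + x1) / 2) ^ 2 - (x1 - x0) ^ 2 / 4) / 2) * (x - (x0 + x1) / 2) *
              (∫ t in y0..y1, Gxx (x, t)) := by
          refine congrArg _ (intervalIntegral.integral_congr fun x _ => ?_)
          rw [hftc3 x]
      _ = ∫ x in x0..x1, ∫ t in y0..y1,
            (-(2 * d) / 3) * ((((x - (x0 + x1) / 2) ^ 2 - (x1 - x0) ^ 2 / 4) / 2) *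
              ((x - (x0 + x1) / 2) * Gxx (x, t))) := by
          rw [← intervalIntegral.integral_const_mul]
          refine intervalIntegral.integral_congr fun x _ => ?_
          rw [show (fun t => (-(2 * d) / 3) * ((((x - (x0 + x1) / 2) ^ 2 - (x1 - x0) ^ 2 / 4) / 2) *
                ((x - (x0 + x1) / 2) * Gxx (x, t))))
              = fun t => ((-(2 * d) / 3) * ((((x - (x0 + x1) / 2) ^ 2 - (x1 - x0) ^ 2 / 4) / 2) *
                (x - (x0 + x1) / 2))) * Gxx (x, t) from funext fun t => by ring,
            intervalIntegral.integral_const_mul]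
          ring
      _ = ∫ y in y0..y1, ∫ x in x0..x1,
            (-(2 * d) / 3) * ((((x - (x0 + x1) / 2) ^ 2 - (x1 - x0) ^ 2 / 4) / 2) *
              ((x - (x0 + x1) / 2) * Gxx (x, y))) :=
          (swap_iterated hx' hy'
            (fun p => (-(2 * d) / 3) * ((((p.1 - (x0 + x1) / 2) ^ 2 - (x1 - x0) ^ 2 / 4) / 2) *
              ((p.1 - (x0 + x1) / 2) * Gxx p))) (by fun_prop)).symm
  -- final assembly
  have hLHS : (∫ p in Icc x0 x1 ×ˢ Icc y0 y1, (G p - (cI + dI * p.1)) * (c + d * p.1))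
      = ∫ y in y0..y1, ∫ x in x0..x1, (G (x, y) - (cI + dI * x)) * (c + d * x) :=
    iterated_yx hx' hy' (fun p => (G p - (cI + dI * p.1)) * (c + d * p.1)) (by fun_prop)
  have hRHS : (∫ p in Icc x0 x1 ×ˢ Icc y0 y1,
      Gxx p * (((p.1 - (x0 + x1) / 2) ^ 2 - (x1 - x0) ^ 2 / 4) / 2) *
        (c + d * p.1 - 2 / 3 * (p.1 - (x0 + x1) / 2) * d))
      = ∫ y in y0..y1, ∫ x in x0..x1,
          Gxx (x, y) * (((x - (x0 + x1) / 2) ^ 2 - (x1 - x0) ^ 2 / 4) / 2) *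
            (c + d * x - 2 / 3 * (x - (x0 + x1) / 2) * d) :=
    iterated_yx hx' hy' (fun p =>
      Gxx p * (((p.1 - (x0 + x1) / 2) ^ 2 - (x1 - x0) ^ 2 / 4) / 2) *
        (c + d * p.1 - 2 / 3 * (p.1 - (x0 + x1) / 2) * d)) (by fun_prop)
  rw [hLHS, hRHS]
  have hAi : Continuous fun y => ∫ x in x0..x1,
      (((x - (x0 + x1) / 2) ^ 2 - (x1 - x0) ^ 2 / 4) / 2) * (Gxx (x, y) * (c + d * x)) :=
    contParam _ (by fun_prop)
  have hBi : Continuous fun y => ∫ x in x0..x1,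
      2 * d * ((((x - (x0 + x1) / 2) ^ 2 - (x1 - x0) ^ 2 / 4) / 2) * (Gx (x, y) - dI)) :=
    contParam _ (by fun_prop)
  have hCi : Continuous fun y => ∫ x in x0..x1,
      (-(2 * d) / 3) * ((((x - (x0 + x1) / 2) ^ 2 - (x1 - x0) ^ 2 / 4) / 2) *
        ((x - (x0 + x1) / 2) * Gxx (x, y))) :=
    contParam _ (by fun_prop)
  have hInner2c : Continuous fun y => ∫ x in x0..x1,
      (((x - (x0 + x1) / 2) ^ 2 - (x1 - x0) ^ 2 / 4) / 2) *
        (Gxx (x, y) * (c + d * x) + 2 * (Gx (x, y) - dI) * d) :=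
    contParam _ (by fun_prop)
  calc ∫ y in y0..y1, ∫ x in x0..x1, (G (x, y) - (cI + dI * x)) * (c + d * x)
      = ∫ y in y0..y1, (((x1 - x0) / 2) *
          ((G (x1, y) - (cI + dI * x1)) * (c + d * x1)
            + (G (x0, y) - (cI + dI * x0)) * (c + d * x0))
        + ∫ x in x0..x1,
            (((x - (x0 + x1) / 2) ^ 2 - (x1 - x0) ^ 2 / 4) / 2) *
              (Gxx (x, y) * (c + d * x) + 2 * (Gx (x, y) - dI) * d)) :=
        intervalIntegral.integral_congr fun y _ => stepA y
    _ = (∫ y in y0..y1, (((x1 - x0) / 2) *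
          ((G (x1, y) - (cI + dI * x1)) * (c + d * x1)
            + (G (x0, y) - (cI + dI * x0)) * (c + d * x0))))
        + ∫ y in y0..y1, ∫ x in x0..x1,
            (((x - (x0 + x1) / 2) ^ 2 - (x1 - x0) ^ 2 / 4) / 2) *
              (Gxx (x, y) * (c + d * x) + 2 * (Gx (x, y) - dI) * d) :=
        intervalIntegral.integral_add (by apply Continuous.intervalIntegrable; fun_prop)
          (hInner2c.intervalIntegrable y0 y1)
    _ = ∫ y in y0..y1, ∫ x in x0..x1,
            (((x - (x0 + x1) / 2) ^ 2 - (x1 - x0) ^ 2 / 4) / 2) *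
              (Gxx (x, y) * (c + d * x) + 2 * (Gx (x, y) - dI) * d) := by
        rw [hbdry, zero_add]
    _ = ∫ y in y0..y1,
          ((∫ x in x0..x1, (((x - (x0 + x1) / 2) ^ 2 - (x1 - x0) ^ 2 / 4) / 2) *
              (Gxx (x, y) * (c + d * x)))
            + ∫ x in x0..x1, 2 * d * ((((x - (x0 + x1) / 2) ^ 2 - (x1 - x0) ^ 2 / 4) / 2) *
              (Gx (x, y) - dI))) := by
        refine intervalIntegral.integral_congr fun y _ => ?_
        rw [← intervalIntegral.integral_add (by apply Continuous.intervalIntegrable; fun_prop)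
          (by apply Continuous.intervalIntegrable; fun_prop)]
        exact intervalIntegral.integral_congr fun x _ => by ring
    _ = (∫ y in y0..y1, ∫ x in x0..x1,
            (((x - (x0 + x1) / 2) ^ 2 - (x1 - x0) ^ 2 / 4) / 2) * (Gxx (x, y) * (c + d * x)))
        + ∫ y in y0..y1, ∫ x in x0..x1,
            2 * d * ((((x - (x0 + x1) / 2) ^ 2 - (x1 - x0) ^ 2 / 4) / 2) * (Gx (x, y) - dI)) :=
        intervalIntegral.integral_add (hAi.intervalIntegrable y0 y1) (hBi.intervalIntegrable y0 y1)
    _ = (∫ y in y0..y1, ∫ x in x0..x1,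
            (((x - (x0 + x1) / 2) ^ 2 - (x1 - x0) ^ 2 / 4) / 2) * (Gxx (x, y) * (c + d * x)))
        + ∫ y in y0..y1, ∫ x in x0..x1,
            (-(2 * d) / 3) * ((((x - (x0 + x1) / 2) ^ 2 - (x1 - x0) ^ 2 / 4) / 2) *
              ((x - (x0 + x1) / 2) * Gxx (x, y))) := by rw [hT3]
    _ = ∫ y in y0..y1,
          ((∫ x in x0..x1, (((x - (x0 + x1) / 2) ^ 2 - (x1 - x0) ^ 2 / 4) / 2) *
              (Gxx (x, y) * (c + d * x)))
            + ∫ x in x0..x1, (-(2 * d) / 3) * ((((x - (x0 + x1) / 2) ^ 2 - (x1 - x0) ^ 2 / 4) / 2) *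
              ((x - (x0 + x1) / 2) * Gxx (x, y)))) :=
        (intervalIntegral.integral_add (hAi.intervalIntegrable y0 y1) (hCi.intervalIntegrable y0 y1)).symm
    _ = ∫ y in y0..y1, ∫ x in x0..x1,
          Gxx (x, y) * (((x - (x0 + x1) / 2) ^ 2 - (x1 - x0) ^ 2 / 4) / 2) *
            (c + d * x - 2 / 3 * (x - (x0 + x1) / 2) * d) := by
        refine intervalIntegral.integral_congr fun y _ => ?_
        rw [← intervalIntegral.integral_add (by apply Continuous.intervalIntegrable; fun_prop)
          (by apply Continuous.intervalIntegrable; fun_prop)]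
        exact intervalIntegral.integral_congr fun x _ => by ring
end
end

section
/- There exists a constant C, independent of ε and N, such that for every mesh rectangle τ of the Shishkin mesh: ‖u − u^I‖_{L^∞(τ)} ≤ C N^{-2} if τ ⊂ Ω_s, and ‖u − u^I‖_{L^∞(τ)} ≤ C N^{-2} ln² N otherwise. -/
open MeasureTheory Real Set

noncomputable section

/-- A function coincides with a bilinear polynomial `a + bx + cy + dxy` on a set. -/
def IsBilinearOn (f : ℝ × ℝ → ℝ) (s : Set (ℝ × ℝ)) : Prop :=
  ∃ a b c d : ℝ, ∀ p ∈ s, f p = a + b * p.1 + c * p.2 + d * (p.1 * p.2)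

/-- The Shishkin-mesh node abscissas. -/
def meshX (N : ℕ) (lx : ℝ) (i : ℕ) : ℝ :=
  if i ≤ N / 2 then 2 * (i : ℝ) * (1 - lx) / (N : ℝ)
  else 1 - 2 * ((N : ℝ) - (i : ℝ)) * lx / (N : ℝ)

/-- The Shishkin-mesh node ordinates. -/
def meshY (N : ℕ) (ly : ℝ) (j : ℕ) : ℝ :=
  if j ≤ N / 3 then 3 * (j : ℝ) * ly / (N : ℝ)
  else if j ≤ 2 * N / 3 then
    (3 * (j : ℝ) / (N : ℝ) - 1) - 3 * (2 * (j : ℝ) - (N : ℝ)) * ly / (N : ℝ)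
  else 1 - 3 * ((N : ℝ) - (j : ℝ)) * ly / (N : ℝ)

/-- The mesh rectangle `τ_{ij} = [x_{i-1}, x_i] × [y_{j-1}, y_j]`. -/
def meshRect (N : ℕ) (lx ly : ℝ) (i j : ℕ) : Set (ℝ × ℝ) :=
  Icc (meshX N lx (i - 1)) (meshX N lx i) ×ˢ Icc (meshY N ly (j - 1)) (meshY N ly j)

def OmegaS (lx ly : ℝ) : Set (ℝ × ℝ) := Icc 0 (1 - lx) ×ˢ Icc ly (1 - ly)
def Omega1R (lx ly : ℝ) : Set (ℝ × ℝ) := Icc (1 - lx) 1 ×ˢ Icc ly (1 - ly)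
def Omega2R (lx ly : ℝ) : Set (ℝ × ℝ) := Icc 0 (1 - lx) ×ˢ (Icc 0 ly ∪ Icc (1 - ly) 1)
def Omega12R (lx ly : ℝ) : Set (ℝ × ℝ) := Icc (1 - lx) 1 ×ˢ (Icc 0 ly ∪ Icc (1 - ly) 1)

/-- Basic assumptions on the Shishkin mesh data (with `ρ = 2.5`). -/
def ShishkinHyp (N : ℕ) (ε β lx ly : ℝ) : Prop :=
  0 < N ∧ 6 ∣ N ∧ 0 < ε ∧ ε ≤ (N : ℝ)⁻¹ ∧ 0 < β ∧
  lx = 2.5 * ε / β * Real.log (N : ℝ) ∧ ly = 2.5 * Real.sqrt ε * Real.log (N : ℝ) ∧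
  lx ≤ 1 / 2 ∧ ly ≤ 1 / 4

/-- `gI` is the piecewise-bilinear nodal interpolant of `g` on the Shishkin mesh. -/
def IsMeshInterpolant (N : ℕ) (lx ly : ℝ) (g gI : ℝ × ℝ → ℝ) : Prop :=
  Continuous gI ∧
  (∀ i j : ℕ, 1 ≤ i → i ≤ N → 1 ≤ j → j ≤ N → IsBilinearOn gI (meshRect N lx ly i j)) ∧
  (∀ i j : ℕ, i ≤ N → j ≤ N →
    gI (meshX N lx i, meshY N ly j) = g (meshX N lx i, meshY N ly j))

def UnitSq : Set (ℝ × ℝ) := Icc 0 1 ×ˢ Icc 0 1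

/-- Bounds on the regular part `S` of the solution decomposition. -/
def BoundS (C0 : ℝ) (S : ℝ × ℝ → ℝ) : Prop :=
  ContDiff ℝ 3 S ∧ ∀ i j : ℕ, i + j ≤ 3 → ∀ p ∈ UnitSq, |pd i j S p| ≤ C0

/-- Bounds on the exponential-layer part `E₁`. -/
def BoundE1 (ε β C0 : ℝ) (E1 : ℝ × ℝ → ℝ) : Prop :=
  ContDiff ℝ 3 E1 ∧ ∀ i j : ℕ, i + j ≤ 3 → ∀ p ∈ UnitSq,
    |pd i j E1 p| ≤ C0 * ε ^ (-(i : ℝ)) * Real.exp (-β * (1 - p.1) / ε)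

/-- Bounds on the characteristic-layer part `E₂`. -/
def BoundE2 (ε C0 : ℝ) (E2 : ℝ × ℝ → ℝ) : Prop :=
  ContDiff ℝ 3 E2 ∧ ∀ i j : ℕ, i + j ≤ 3 → ∀ p ∈ UnitSq,
    |pd i j E2 p| ≤ C0 * ε ^ (-(j : ℝ) / 2) *
      (Real.exp (-p.2 / Real.sqrt ε) + Real.exp (-(1 - p.2) / Real.sqrt ε))

/-- Bounds on the corner-layer part `E₁₂`. -/
def BoundE12 (ε β C0 : ℝ) (E12 : ℝ × ℝ → ℝ) : Prop :=
  ContDiff ℝ 3 E12 ∧ ∀ i j : ℕ, i + j ≤ 3 → ∀ p ∈ UnitSq,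
    |pd i j E12 p| ≤ C0 * ε ^ (-((i : ℝ) + (j : ℝ) / 2)) * Real.exp (-β * (1 - p.1) / ε) *
      (Real.exp (-p.2 / Real.sqrt ε) + Real.exp (-(1 - p.2) / Real.sqrt ε))

/-- Membership in the bilinear finite element space `V^N`. -/
def MemVN (N : ℕ) (lx ly : ℝ) (v : ℝ × ℝ → ℝ) : Prop :=
  Continuous v ∧
  (∀ p ∈ UnitSq, (p.1 = 0 ∨ p.1 = 1 ∨ p.2 = 0 ∨ p.2 = 1) → v p = 0) ∧
  ∀ i j : ℕ, 1 ≤ i → i ≤ N → 1 ≤ j → j ≤ N → IsBilinearOn v (meshRect N lx ly i j)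

/-- The SDFEM stabilization parameter `δ`. -/
def sdDelta (N : ℕ) (lx ly Cstar : ℝ) : ℝ × ℝ → ℝ :=
  (OmegaS lx ly ∪ Omega2R lx ly).indicator fun _ => Cstar / (N : ℝ)

/-- The SDFEM bilinear form `B`. -/
def Bform (N : ℕ) (lx ly ε b c Cstar : ℝ) (v w : ℝ × ℝ → ℝ) : ℝ :=
  ∫ p in UnitSq,
    (ε * (pdx v p * pdx w p + pdy v p * pdy w p)
      + (b * pdx v p + c * v p) * w p
      + (b * pdx v p + c * v p) * (sdDelta N lx ly Cstar p * (b * pdx w p)))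

/-- The square of the SDFEM energy norm `|||·|||`. -/
def energySq (N : ℕ) (lx ly ε b c Cstar : ℝ) (v : ℝ × ℝ → ℝ) : ℝ :=
  ∫ p in UnitSq,
    ((ε + b ^ 2 * sdDelta N lx ly Cstar p) * pdx v p ^ 2
      + ε * pdy v p ^ 2 + c * v p ^ 2)

/-- The neighbourhood `Ω₀` of the point `(xs, ys)`. -/
def OmegaZero (N : ℕ) (xs ys K sx sy : ℝ) : Set (ℝ × ℝ) :=
  {p : ℝ × ℝ | p ∈ Ioo (0 : ℝ) 1 ×ˢ Ioo (0 : ℝ) 1 ∧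
    p.1 - xs ≤ K * sx * Real.log (N : ℝ) ∧ |p.2 - ys| ≤ K * sy * Real.log (N : ℝ)}

/-- `Ω₀'`: the smallest union of mesh rectangles containing `Ω₀`. -/
def OmegaZero' (N : ℕ) (lx ly xs ys K sx sy : ℝ) : Set (ℝ × ℝ) :=
  ⋃ i ∈ Finset.Icc 1 N, ⋃ j ∈ Finset.Icc 1 N,
    ⋃ (_ : volume (OmegaZero N xs ys K sx sy ∩ meshRect N lx ly i j) ≠ 0),
      meshRect N lx ly i j


lemma taylor_bd {f f' f'' : ℝ → ℝ} {a b M : ℝ} (hab : a ≤ b)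
    (h1 : ∀ t ∈ Icc a b, HasDerivAt f (f' t) t)
    (h2 : ∀ t ∈ Icc a b, HasDerivAt f' (f'' t) t)
    (hM : ∀ t ∈ Icc a b, |f'' t| ≤ M)
    {x : ℝ} (hx : x ∈ Icc a b) :
    |f x - f a - f' a * (x - a)| ≤ M * (b - a) ^ 2 := by
  have ha : a ∈ Icc a b := ⟨le_refl a, hab⟩
  have hM0 : 0 ≤ M := le_trans (abs_nonneg _) (hM a ha)
  have hd : ∀ t ∈ Icc a b, |f' t - f' a| ≤ M * (b - a) := by
    intro t ht
    have h := Convex.norm_image_sub_le_of_norm_hasDerivWithin_le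
      (fun s hs => (h2 s hs).hasDerivWithinAt)
      (fun s hs => hM s hs) (convex_Icc a b) ha ht
    rw [Real.norm_eq_abs, Real.norm_eq_abs] at h
    refine h.trans ?_
    have : |t - a| ≤ b - a := by
      rw [abs_of_nonneg (by linarith [ht.1])]; linarith [ht.2]
    nlinarith
  set g : ℝ → ℝ := fun t => f t - f' a * t with hg
  have hg' : ∀ t ∈ Icc a b, HasDerivAt g (f' t - f' a) t := by
    intro t ht
    have hl : HasDerivAt (fun t => f' a * t) (f' a) t := by
      simpa using (hasDerivAt_id t).const_mul (f' a)
    exact (h1 t ht).sub hl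
  have h := Convex.norm_image_sub_le_of_norm_hasDerivWithin_le
    (fun s hs => (hg' s hs).hasDerivWithinAt)
    (fun s hs => by rw [Real.norm_eq_abs]; exact hd s hs) (convex_Icc a b) ha hx
  rw [Real.norm_eq_abs, Real.norm_eq_abs] at h
  have hxa : |x - a| ≤ b - a := by
    rw [abs_of_nonneg (by linarith [hx.1])]; linarith [hx.2]
  have : |f x - f a - f' a * (x - a)| = |g x - g a| := by
    simp only [hg]; ring_nf
  rw [this]
  refine h.trans ?_
  nlinarith [abs_nonneg (x - a), mul_nonneg hM0 (by linarith : (0:ℝ) ≤ b - a)]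

lemma interp1d {f f' f'' : ℝ → ℝ} {a b M : ℝ} (hab : a < b)
    (h1 : ∀ t ∈ Icc a b, HasDerivAt f (f' t) t)
    (h2 : ∀ t ∈ Icc a b, HasDerivAt f' (f'' t) t)
    (hM : ∀ t ∈ Icc a b, |f'' t| ≤ M)
    {x : ℝ} (hx : x ∈ Icc a b) :
    |f x - ((b - x) * f a + (x - a) * f b) / (b - a)| ≤ 2 * M * (b - a) ^ 2 := by
  have hba : b - a ≠ 0 := by linarith
  have hba' : (0:ℝ) < b - a := by linarith
  have hM0 : 0 ≤ M := le_trans (abs_nonneg _) (hM a ⟨le_refl a, hab.le⟩)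
  set c : ℝ := (f b - f a) / (b - a) with hc
  set e : ℝ → ℝ := fun t => f t - (c * t + (b * f a - a * f b) / (b - a)) with he
  set e' : ℝ → ℝ := fun t => f' t - c with he'
  have h1' : ∀ t ∈ Icc a b, HasDerivAt e (e' t) t := by
    intro t ht
    have hl : HasDerivAt (fun t => c * t + (b * f a - a * f b) / (b - a)) c t := by
      simpa using ((hasDerivAt_id t).const_mul c).add_const ((b * f a - a * f b) / (b - a))
    exact (h1 t ht).sub hl
  have h2' : ∀ t ∈ Icc a b, HasDerivAt e' (f'' t) t := fun t ht => (h2 t ht).sub_const c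
  have hea : e a = 0 := by simp only [he, hc]; field_simp; ring
  have heb : e b = 0 := by simp only [he, hc]; field_simp; ring
  have T1 := taylor_bd hab.le h1' h2' hM hx
  have T2 := taylor_bd hab.le h1' h2' hM (⟨hab.le, le_refl b⟩ : b ∈ Icc a b)
  rw [hea] at T1 T2
  rw [heb] at T2
  have he'a : |e' a| ≤ M * (b - a) := by
    have : |e' a * (b - a)| ≤ M * (b - a) ^ 2 := by
      have : |0 - 0 - e' a * (b - a)| = |e' a * (b - a)| := by rw [abs_sub_comm]; ring_nf
      linarith [T2, this.symm.le, this.le]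
    rw [abs_mul, abs_of_pos hba'] at this
    have h2 : |e' a| * (b - a) ≤ (M * (b - a)) * (b - a) := by nlinarith
    exact le_of_mul_le_mul_right h2 hba'
  have hxa : |x - a| ≤ b - a := by
    rw [abs_of_nonneg (by linarith [hx.1])]; linarith [hx.2]
  have hex : |e x| ≤ 2 * M * (b - a) ^ 2 := by
    have : |e x| ≤ |e x - 0 - e' a * (x - a)| + |e' a| * |x - a| := by
      rw [← abs_mul]
      calc |e x| = |(e x - 0 - e' a * (x - a)) + e' a * (x - a)| := by ring_nf
      _ ≤ _ := abs_add_le _ _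
    refine this.trans ?_
    nlinarith [abs_nonneg (x - a), abs_nonneg (e' a)]
  have : f x - ((b - x) * f a + (x - a) * f b) / (b - a) = e x := by
    simp only [he, hc]; field_simp; ring
  rw [this]; exact hex

lemma contDiff_pdx_s3 {g : ℝ × ℝ → ℝ} {n : ℕ} (h : ContDiff ℝ (n+1) g) :
    ContDiff ℝ n (pdx g) := by
  have h1 : ContDiff ℝ n (fderiv ℝ g) := h.fderiv_right (by exact_mod_cast le_refl _)
  exact h1.clm_apply contDiff_const

lemma contDiff_pdy_s3 {g : ℝ × ℝ → ℝ} {n : ℕ} (h : ContDiff ℝ (n+1) g) :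
    ContDiff ℝ n (pdy g) := by
  have h1 : ContDiff ℝ n (fderiv ℝ g) := h.fderiv_right (by exact_mod_cast le_refl _)
  exact h1.clm_apply contDiff_const

lemma sliceX_hasDerivAt {g : ℝ × ℝ → ℝ} (hg : Differentiable ℝ g) (y x : ℝ) :
    HasDerivAt (fun t => g (t, y)) (pdx g (x, y)) x := by
  have hl : HasFDerivAt (fun t : ℝ => (t, y))
      ((ContinuousLinearMap.id ℝ ℝ).prod 0) x :=
    (hasFDerivAt_id x).prodMk (hasFDerivAt_const y x)
  have h := ((hg (x, y)).hasFDerivAt.comp x hl).hasDerivAt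
  simpa [pdx, Function.comp_def] using h

lemma sliceY_hasDerivAt {g : ℝ × ℝ → ℝ} (hg : Differentiable ℝ g) (x y : ℝ) :
    HasDerivAt (fun t => g (x, t)) (pdy g (x, y)) y := by
  have hl : HasFDerivAt (fun t : ℝ => (x, t))
      ((0 : ℝ →L[ℝ] ℝ).prod (ContinuousLinearMap.id ℝ ℝ)) y :=
    (hasFDerivAt_const x y).prodMk (hasFDerivAt_id y)
  have h := ((hg (x, y)).hasFDerivAt.comp y hl).hasDerivAt
  simpa [pdy, Function.comp_def] using h

def Lb (g : ℝ × ℝ → ℝ) (x0 x1 y0 y1 : ℝ) (p : ℝ × ℝ) : ℝ :=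
  ((x1 - p.1) * ((y1 - p.2) * g (x0, y0) + (p.2 - y0) * g (x0, y1))
    + (p.1 - x0) * ((y1 - p.2) * g (x1, y0) + (p.2 - y0) * g (x1, y1)))
  / ((x1 - x0) * (y1 - y0))

lemma pd20 (g : ℝ × ℝ → ℝ) : pd 2 0 g = pdx (pdx g) := by
  show pdx^[2] (pdy^[0] g) = _
  simp [Function.iterate_succ, Function.iterate_zero]

lemma pd02 (g : ℝ × ℝ → ℝ) : pd 0 2 g = pdy (pdy g) := by
  simp [pd, Function.iterate_succ, Function.iterate_zero]

lemma stab2d {g : ℝ × ℝ → ℝ} {x0 x1 y0 y1 M : ℝ} (hx : x0 < x1) (hy : y0 < y1)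
    (hM : ∀ q ∈ Icc x0 x1 ×ˢ Icc y0 y1, |g q| ≤ M)
    {p : ℝ × ℝ} (hp : p ∈ Icc x0 x1 ×ˢ Icc y0 y1) :
    |g p - Lb g x0 x1 y0 y1 p| ≤ 2 * M := by
  obtain ⟨⟨hx0, hx1⟩, hy0, hy1⟩ := hp
  have hc00 : |g (x0, y0)| ≤ M := hM _ ⟨⟨le_refl _, hx.le⟩, ⟨le_refl _, hy.le⟩⟩
  have hc01 : |g (x0, y1)| ≤ M := hM _ ⟨⟨le_refl _, hx.le⟩, ⟨hy.le, le_refl _⟩⟩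
  have hc10 : |g (x1, y0)| ≤ M := hM _ ⟨⟨hx.le, le_refl _⟩, ⟨le_refl _, hy.le⟩⟩
  have hc11 : |g (x1, y1)| ≤ M := hM _ ⟨⟨hx.le, le_refl _⟩, ⟨hy.le, le_refl _⟩⟩
  have hgp : |g p| ≤ M := hM _ ⟨⟨hx0, hx1⟩, ⟨hy0, hy1⟩⟩
  have hD : (0:ℝ) < (x1 - x0) * (y1 - y0) := by nlinarith
  have hnum : |(x1 - p.1) * ((y1 - p.2) * g (x0, y0) + (p.2 - y0) * g (x0, y1))
      + (p.1 - x0) * ((y1 - p.2) * g (x1, y0) + (p.2 - y0) * g (x1, y1))|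
      ≤ M * ((x1 - x0) * (y1 - y0)) := by
    have t1 := abs_add_le ((x1 - p.1) * ((y1 - p.2) * g (x0, y0) + (p.2 - y0) * g (x0, y1)))
      ((p.1 - x0) * ((y1 - p.2) * g (x1, y0) + (p.2 - y0) * g (x1, y1)))
    have t2 := abs_add_le ((y1 - p.2) * g (x0, y0)) ((p.2 - y0) * g (x0, y1))
    have t3 := abs_add_le ((y1 - p.2) * g (x1, y0)) ((p.2 - y0) * g (x1, y1))
    rw [abs_mul, abs_mul] at t1
    rw [abs_mul, abs_mul] at t2 t3
    rw [abs_of_nonneg (by linarith : (0:ℝ) ≤ x1 - p.1),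
        abs_of_nonneg (by linarith : (0:ℝ) ≤ p.1 - x0)] at t1
    rw [abs_of_nonneg (by linarith : (0:ℝ) ≤ y1 - p.2),
        abs_of_nonneg (by linarith : (0:ℝ) ≤ p.2 - y0)] at t2 t3
    have a1 : (0:ℝ) ≤ x1 - p.1 := by linarith
    have a2 : (0:ℝ) ≤ p.1 - x0 := by linarith
    have b1 : (0:ℝ) ≤ y1 - p.2 := by linarith
    have b2 : (0:ℝ) ≤ p.2 - y0 := by linarith
    have u2 := mul_le_mul_of_nonneg_left t2 a1
    have u3 := mul_le_mul_of_nonneg_left t3 a2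
    nlinarith [mul_nonneg (mul_nonneg a1 b1) (sub_nonneg.2 hc00),
      mul_nonneg (mul_nonneg a1 b2) (sub_nonneg.2 hc01),
      mul_nonneg (mul_nonneg a2 b1) (sub_nonneg.2 hc10),
      mul_nonneg (mul_nonneg a2 b2) (sub_nonneg.2 hc11)]
  have hLb : |Lb g x0 x1 y0 y1 p| ≤ M := by
    rw [Lb, abs_div, abs_of_pos hD]
    rw [div_le_iff₀ hD]
    exact hnum
  calc |g p - Lb g x0 x1 y0 y1 p| ≤ |g p| + |Lb g x0 x1 y0 y1 p| := abs_sub _ _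
  _ ≤ 2 * M := by linarith

lemma err2d {g : ℝ × ℝ → ℝ} (hg : ContDiff ℝ 3 g) {x0 x1 y0 y1 Mx My : ℝ}
    (hx01 : x0 < x1) (hy01 : y0 < y1)
    (hMx : ∀ q ∈ Icc x0 x1 ×ˢ Icc y0 y1, |pd 2 0 g q| ≤ Mx)
    (hMy : ∀ q ∈ Icc x0 x1 ×ˢ Icc y0 y1, |pd 0 2 g q| ≤ My)
    {p : ℝ × ℝ} (hp : p ∈ Icc x0 x1 ×ˢ Icc y0 y1) :
    |g p - Lb g x0 x1 y0 y1 p| ≤ 2 * Mx * (x1 - x0) ^ 2 + 2 * My * (y1 - y0) ^ 2 := by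
  obtain ⟨⟨hx0, hx1⟩, hy0, hy1⟩ := hp
  have hgd : Differentiable ℝ g := hg.differentiable (by norm_num)
  have hgx : ContDiff ℝ 2 (pdx g) := contDiff_pdx_s3 (n := 2) hg
  have hgy : ContDiff ℝ 2 (pdy g) := contDiff_pdy_s3 (n := 2) hg
  have hgxd : Differentiable ℝ (pdx g) := hgx.differentiable (by norm_num)
  have hgyd : Differentiable ℝ (pdy g) := hgy.differentiable (by norm_num)
  have hbay : y1 - y0 ≠ 0 := by linarith
  set x := p.1
  set y := p.2
  -- vertical slice error
  have T1 : |g (x, y) - ((y1 - y) * g (x, y0) + (y - y0) * g (x, y1)) / (y1 - y0)|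
      ≤ 2 * My * (y1 - y0) ^ 2 := by
    exact interp1d (f := fun t => g (x, t)) (f' := fun t => pdy g (x, t))
      (f'' := fun t => pd 0 2 g (x, t)) hy01
      (fun t ht => sliceY_hasDerivAt hgd x t)
      (fun t ht => by rw [pd02]; exact sliceY_hasDerivAt hgyd x t)
      (fun t ht => hMy (x, t) ⟨⟨hx0, hx1⟩, ht⟩) ⟨hy0, hy1⟩
  -- Φ : horizontal combination
  set Φ : ℝ → ℝ := fun t => ((y1 - y) * g (t, y0) + (y - y0) * g (t, y1)) / (y1 - y0)
    with hΦ
  have T2 : |Φ x - ((x1 - x) * Φ x0 + (x - x0) * Φ x1) / (x1 - x0)|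
      ≤ 2 * Mx * (x1 - x0) ^ 2 := by
    refine interp1d (f := Φ)
      (f' := fun t => ((y1 - y) * pdx g (t, y0) + (y - y0) * pdx g (t, y1)) / (y1 - y0))
      (f'' := fun t => ((y1 - y) * pd 2 0 g (t, y0) + (y - y0) * pd 2 0 g (t, y1)) / (y1 - y0))
      hx01 ?_ ?_ ?_ ⟨hx0, hx1⟩
    · intro t ht
      have h := (((sliceX_hasDerivAt hgd y0 t).const_mul (y1 - y)).add
        ((sliceX_hasDerivAt hgd y1 t).const_mul (y - y0))).div_const (y1 - y0)
      simpa [hΦ] using h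
    · intro t ht
      rw [pd20]
      exact (((sliceX_hasDerivAt hgxd y0 t).const_mul (y1 - y)).add
        ((sliceX_hasDerivAt hgxd y1 t).const_mul (y - y0))).div_const (y1 - y0)
    · intro t ht
      have b0 : |pd 2 0 g (t, y0)| ≤ Mx := hMx _ ⟨ht, ⟨le_refl _, hy01.le⟩⟩
      have b1 : |pd 2 0 g (t, y1)| ≤ Mx := hMx _ ⟨ht, ⟨hy01.le, le_refl _⟩⟩
      rw [abs_div, abs_of_pos (by linarith : (0:ℝ) < y1 - y0), div_le_iff₀ (by linarith : (0:ℝ) < y1 - y0)]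
      calc |(y1 - y) * pd 2 0 g (t, y0) + (y - y0) * pd 2 0 g (t, y1)|
          ≤ |(y1 - y) * pd 2 0 g (t, y0)| + |(y - y0) * pd 2 0 g (t, y1)| := abs_add_le _ _
        _ = (y1 - y) * |pd 2 0 g (t, y0)| + (y - y0) * |pd 2 0 g (t, y1)| := by
            rw [abs_mul, abs_mul, abs_of_nonneg (by linarith : (0:ℝ) ≤ y1 - y),
              abs_of_nonneg (by linarith : (0:ℝ) ≤ y - y0)]
        _ ≤ Mx * (y1 - y0) := by nlinarith
  have hsplit : g p - Lb g x0 x1 y0 y1 p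
      = (g (x, y) - ((y1 - y) * g (x, y0) + (y - y0) * g (x, y1)) / (y1 - y0))
        + (Φ x - ((x1 - x) * Φ x0 + (x - x0) * Φ x1) / (x1 - x0)) := by
    have hpxy : p = (x, y) := rfl
    rw [hpxy, Lb, hΦ]
    field_simp
    ring
  rw [hsplit]
  calc _ ≤ _ + _ := abs_add_le _ _
  _ ≤ 2 * My * (y1 - y0) ^ 2 + 2 * Mx * (x1 - x0) ^ 2 := add_le_add T1 T2
  _ = _ := by ring

lemma Lb_add4 (S E1 E2 E12 u : ℝ × ℝ → ℝ) (hu : ∀ p, u p = S p + E1 p + E2 p + E12 p)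
    (x0 x1 y0 y1 : ℝ) (p : ℝ × ℝ) :
    Lb u x0 x1 y0 y1 p = Lb S x0 x1 y0 y1 p + Lb E1 x0 x1 y0 y1 p
      + Lb E2 x0 x1 y0 y1 p + Lb E12 x0 x1 y0 y1 p := by
  simp only [Lb, hu]; ring

lemma interpolant_eq_Lb {x0 x1 y0 y1 : ℝ} (hx : x0 < x1) (hy : y0 < y1)
    {v u : ℝ × ℝ → ℝ}
    (hbil : ∃ a b c d : ℝ, ∀ p ∈ Icc x0 x1 ×ˢ Icc y0 y1,
      v p = a + b * p.1 + c * p.2 + d * (p.1 * p.2))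
    (h00 : v (x0, y0) = u (x0, y0)) (h10 : v (x1, y0) = u (x1, y0))
    (h01 : v (x0, y1) = u (x0, y1)) (h11 : v (x1, y1) = u (x1, y1))
    {p : ℝ × ℝ} (hp : p ∈ Icc x0 x1 ×ˢ Icc y0 y1) :
    v p = Lb u x0 x1 y0 y1 p := by
  obtain ⟨a, b, c, d, hq⟩ := hbil
  have c00 : (x0, y0) ∈ Icc x0 x1 ×ˢ Icc y0 y1 := ⟨⟨le_refl _, hx.le⟩, ⟨le_refl _, hy.le⟩⟩
  have c10 : (x1, y0) ∈ Icc x0 x1 ×ˢ Icc y0 y1 := ⟨⟨hx.le, le_refl _⟩, ⟨le_refl _, hy.le⟩⟩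
  have c01 : (x0, y1) ∈ Icc x0 x1 ×ˢ Icc y0 y1 := ⟨⟨le_refl _, hx.le⟩, ⟨hy.le, le_refl _⟩⟩
  have c11 : (x1, y1) ∈ Icc x0 x1 ×ˢ Icc y0 y1 := ⟨⟨hx.le, le_refl _⟩, ⟨hy.le, le_refl _⟩⟩
  have e00 := (h00.symm.trans (hq _ c00))
  have e10 := (h10.symm.trans (hq _ c10))
  have e01 := (h01.symm.trans (hq _ c01))
  have e11 := (h11.symm.trans (hq _ c11))
  rw [hq p hp, Lb, e00, e10, e01, e11]
  have hDx : x1 - x0 ≠ 0 := by linarith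
  have hDy : y1 - y0 ≠ 0 := by linarith
  field_simp
  ring

section MeshFacts
variable {N m : ℕ} {lx ly : ℝ}

lemma mX2 (hm : N = 6 * m) (hm1 : 1 ≤ m) {i : ℕ} (hi : N / 2 ≤ i) :
    meshX N lx i = 1 - 2 * ((N : ℝ) - (i : ℝ)) * lx / (N : ℝ) := by
  rw [meshX]
  by_cases h : i ≤ N / 2
  · have hieq : i = 3 * m := by omega
    rw [if_pos h, hieq]
    have hNR : (N : ℝ) = 6 * (m : ℝ) := by rw [hm]; push_cast; ring
    have hmR : (0:ℝ) < (m : ℝ) := by exact_mod_cast hm1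
    push_cast
    rw [hNR]
    field_simp
    ring
  · rw [if_neg h]

lemma mY2 (hm : N = 6 * m) (hm1 : 1 ≤ m) {j : ℕ} (hj : N / 3 ≤ j) (hj2 : j ≤ 2 * N / 3) :
    meshY N ly j = (3 * (j : ℝ) / (N : ℝ) - 1) - 3 * (2 * (j : ℝ) - (N : ℝ)) * ly / (N : ℝ) := by
  rw [meshY]
  by_cases h : j ≤ N / 3
  · have hjeq : j = 2 * m := by omega
    rw [if_pos h, hjeq]
    have hNR : (N : ℝ) = 6 * (m : ℝ) := by rw [hm]; push_cast; ring
    have hmR : (0:ℝ) < (m : ℝ) := by exact_mod_cast hm1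
    push_cast
    rw [hNR]
    field_simp
    ring
  · rw [if_neg h, if_pos (by omega : j ≤ 2 * N / 3)]

lemma mY3 (hm : N = 6 * m) (hm1 : 1 ≤ m) {j : ℕ} (hj : 2 * N / 3 ≤ j) :
    meshY N ly j = 1 - 3 * ((N : ℝ) - (j : ℝ)) * ly / (N : ℝ) := by
  rw [meshY]
  have hnj : ¬ j ≤ N / 3 := by omega
  rw [if_neg hnj]
  by_cases h : j ≤ 2 * N / 3
  · have hjeq : j = 4 * m := by omega
    rw [if_pos h, hjeq]
    have hNR : (N : ℝ) = 6 * (m : ℝ) := by rw [hm]; push_cast; ring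
    have hmR : (0:ℝ) < (m : ℝ) := by exact_mod_cast hm1
    push_cast
    rw [hNR]
    field_simp
    ring
  · rw [if_neg h]

lemma xfacts_coarse (hm : N = 6 * m) (hm1 : 1 ≤ m) (hlx0 : 0 < lx) (hlx : lx ≤ 1/2)
    {i : ℕ} (hi1 : 1 ≤ i) (hi : i ≤ N / 2) :
    meshX N lx (i-1) < meshX N lx i ∧ 0 ≤ meshX N lx (i-1) ∧ meshX N lx i ≤ 1 - lx ∧
      meshX N lx i - meshX N lx (i-1) = 2 * (1 - lx) / (N : ℝ) := by
  have hNR : (0:ℝ) < (N : ℝ) := by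
    have : 0 < N := by omega
    exact_mod_cast this
  have h0 : i - 1 ≤ N / 2 := by omega
  have hiR : ((i - 1 : ℕ) : ℝ) = (i : ℝ) - 1 := by
    push_cast [hi1]; ring
  rw [meshX, meshX, if_pos h0, if_pos hi, hiR]
  have h2i : 2 * (i : ℝ) ≤ (N : ℝ) := by
    have : 2 * i ≤ N := by omega
    exact_mod_cast this
  have hi0 : (1:ℝ) ≤ (i : ℝ) := by exact_mod_cast hi1
  refine ⟨?_, ?_, ?_, ?_⟩
  · rw [div_lt_div_iff₀ hNR hNR]; nlinarith
  · apply div_nonneg _ hNR.le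
    nlinarith
  · rw [div_le_iff₀ hNR]; nlinarith
  · field_simp; ring

lemma xfacts_fine (hm : N = 6 * m) (hm1 : 1 ≤ m) (hlx0 : 0 < lx) (hlx : lx ≤ 1/2)
    {i : ℕ} (hi : N / 2 < i) (hiN : i ≤ N) :
    meshX N lx (i-1) < meshX N lx i ∧ (1 - lx) ≤ meshX N lx (i-1) ∧ meshX N lx i ≤ 1 ∧
      meshX N lx i - meshX N lx (i-1) = 2 * lx / (N : ℝ) := by
  have hNR : (0:ℝ) < (N : ℝ) := by
    have : 0 < N := by omega
    exact_mod_cast this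
  have hiR : ((i - 1 : ℕ) : ℝ) = (i : ℝ) - 1 := by
    push_cast [(by omega : 1 ≤ i)]; ring
  rw [mX2 hm hm1 (by omega : N / 2 ≤ i), mX2 hm hm1 (by omega : N / 2 ≤ i - 1), hiR]
  have h2i : (N : ℝ) ≤ 2 * ((i : ℝ) - 1) := by
    have h' : N + 2 ≤ 2 * i := by omega
    have h'' := (Nat.cast_le (α := ℝ)).2 h'
    push_cast at h''
    linarith
  have hiN' : (i : ℝ) ≤ (N : ℝ) := by exact_mod_cast hiN
  refine ⟨?_, ?_, ?_, ?_⟩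
  · have : 2 * ((N:ℝ) - ((i:ℝ)-1)) * lx / N - 2 * ((N:ℝ) - (i:ℝ)) * lx / N = 2*lx/N := by
      field_simp; ring
    nlinarith [div_pos (by nlinarith : (0:ℝ) < 2*lx) hNR]
  · have : 2 * ((N:ℝ) - ((i:ℝ)-1)) * lx / N ≤ lx := by
      rw [div_le_iff₀ hNR]; nlinarith
    linarith
  · have : 0 ≤ 2 * ((N:ℝ) - (i:ℝ)) * lx / N := by
      apply div_nonneg _ hNR.le; nlinarith
    linarith
  · field_simp; ring

lemma yfacts_low (hm : N = 6 * m) (hm1 : 1 ≤ m) (hly0 : 0 < ly) (hly : ly ≤ 1/4)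
    {j : ℕ} (hj1 : 1 ≤ j) (hj : j ≤ N / 3) :
    meshY N ly (j-1) < meshY N ly j ∧ 0 ≤ meshY N ly (j-1) ∧ meshY N ly j ≤ ly ∧
      meshY N ly j - meshY N ly (j-1) = 3 * ly / (N : ℝ) := by
  have hNR : (0:ℝ) < (N : ℝ) := by
    have : 0 < N := by omega
    exact_mod_cast this
  have hjR : ((j - 1 : ℕ) : ℝ) = (j : ℝ) - 1 := by push_cast [hj1]; ring
  rw [meshY, meshY, if_pos (by omega : j - 1 ≤ N / 3), if_pos hj, hjR]
  have h3j : 3 * (j : ℝ) ≤ (N : ℝ) := by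
    have : 3 * j ≤ N := by omega
    exact_mod_cast this
  have hj0 : (1:ℝ) ≤ (j : ℝ) := by exact_mod_cast hj1
  refine ⟨?_, ?_, ?_, ?_⟩
  · rw [div_lt_div_iff₀ hNR hNR]; nlinarith
  · apply div_nonneg _ hNR.le; nlinarith
  · rw [div_le_iff₀ hNR]; nlinarith
  · field_simp; ring

lemma yfacts_mid (hm : N = 6 * m) (hm1 : 1 ≤ m) (hly0 : 0 < ly) (hly : ly ≤ 1/4)
    {j : ℕ} (hj : N / 3 < j) (hj2 : j ≤ 2 * N / 3) :
    meshY N ly (j-1) < meshY N ly j ∧ ly ≤ meshY N ly (j-1) ∧ meshY N ly j ≤ 1 - ly ∧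
      meshY N ly j - meshY N ly (j-1) = 3 * (1 - 2 * ly) / (N : ℝ) := by
  have hNR : (0:ℝ) < (N : ℝ) := by
    have : 0 < N := by omega
    exact_mod_cast this
  have hjR : ((j - 1 : ℕ) : ℝ) = (j : ℝ) - 1 := by push_cast [(by omega : 1 ≤ j)]; ring
  rw [mY2 hm hm1 (by omega : N / 3 ≤ j) hj2, mY2 hm hm1 (by omega : N / 3 ≤ j - 1) (by omega), hjR]
  have h1 : (N : ℝ) ≤ 3 * ((j:ℝ) - 1) := by
    have h' : N + 3 ≤ 3 * j := by omega
    have h'' := (Nat.cast_le (α := ℝ)).2 h'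
    push_cast at h''
    linarith
  have h2 : 3 * (j : ℝ) ≤ 2 * (N : ℝ) := by
    have : 3 * j ≤ 2 * N := by omega
    exact_mod_cast this
  refine ⟨?_, ?_, ?_, ?_⟩
  · have e : ((3 * (j:ℝ) / N - 1) - 3 * (2*(j:ℝ) - N) * ly / N)
        - ((3 * ((j:ℝ)-1) / N - 1) - 3 * (2*((j:ℝ)-1) - N) * ly / N) = 3 * (1 - 2*ly) / N := by
      field_simp; ring
    nlinarith [div_pos (by nlinarith : (0:ℝ) < 3 * (1 - 2*ly)) hNR]
  · have e : (3 * ((j:ℝ)-1) / N - 1) - 3 * (2*((j:ℝ)-1) - N) * ly / N - ly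
        = (3*((j:ℝ)-1) - N) * (1 - 2*ly) / N := by
      field_simp; ring
    have : 0 ≤ (3*((j:ℝ)-1) - N) * (1 - 2*ly) / N := by
      apply div_nonneg _ hNR.le; nlinarith
    linarith
  · have e : (1 - ly) - ((3 * (j:ℝ) / N - 1) - 3 * (2*(j:ℝ) - N) * ly / N)
        = (2*N - 3*(j:ℝ)) * (1 - 2*ly) / N := by
      field_simp; ring
    have : 0 ≤ (2*(N:ℝ) - 3*(j:ℝ)) * (1 - 2*ly) / N := by
      apply div_nonneg _ hNR.le; nlinarith
    linarith
  · field_simp; ring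

lemma yfacts_high (hm : N = 6 * m) (hm1 : 1 ≤ m) (hly0 : 0 < ly) (hly : ly ≤ 1/4)
    {j : ℕ} (hj : 2 * N / 3 < j) (hjN : j ≤ N) :
    meshY N ly (j-1) < meshY N ly j ∧ (1 - ly) ≤ meshY N ly (j-1) ∧ meshY N ly j ≤ 1 ∧
      meshY N ly j - meshY N ly (j-1) = 3 * ly / (N : ℝ) := by
  have hNR : (0:ℝ) < (N : ℝ) := by
    have : 0 < N := by omega
    exact_mod_cast this
  have hjR : ((j - 1 : ℕ) : ℝ) = (j : ℝ) - 1 := by push_cast [(by omega : 1 ≤ j)]; ring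
  rw [mY3 hm hm1 (by omega : 2 * N / 3 ≤ j), mY3 hm hm1 (by omega : 2 * N / 3 ≤ j - 1), hjR]
  have h1 : 2 * (N : ℝ) ≤ 3 * ((j:ℝ) - 1) := by
    have h' : 2 * N + 3 ≤ 3 * j := by omega
    have h'' := (Nat.cast_le (α := ℝ)).2 h'
    push_cast at h''
    linarith
  have hjN' : (j : ℝ) ≤ (N : ℝ) := by exact_mod_cast hjN
  refine ⟨?_, ?_, ?_, ?_⟩
  · have e : (1 - 3 * ((N:ℝ) - (j:ℝ)) * ly / N) - (1 - 3 * ((N:ℝ) - ((j:ℝ)-1)) * ly / N)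
        = 3 * ly / N := by field_simp; ring
    nlinarith [div_pos (by nlinarith : (0:ℝ) < 3 * ly) hNR]
  · have : 3 * ((N:ℝ) - ((j:ℝ)-1)) * ly / N ≤ ly := by
      rw [div_le_iff₀ hNR]; nlinarith
    linarith
  · have : 0 ≤ 3 * ((N:ℝ) - (j:ℝ)) * ly / N := by
      apply div_nonneg _ hNR.le; nlinarith
    linarith
  · field_simp; ring

end MeshFacts


section Comp
variable {C0 ε β L n A : ℝ} {x0 x1 y0 y1 : ℝ} {p : ℝ × ℝ}

lemma sqb {w c : ℝ} (h0 : 0 ≤ w) (h : w ≤ c) : w^2 ≤ c^2 := by nlinarith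

lemma compS {S : ℝ × ℝ → ℝ} (hC0 : 0 < C0) (hbS : BoundS C0 S)
    (hn : 0 < n) (hx : x0 < x1) (hy : y0 < y1)
    (hsub : Icc x0 x1 ×ˢ Icc y0 y1 ⊆ UnitSq)
    (hwx : x1 - x0 ≤ 3 / n) (hwy : y1 - y0 ≤ 3 / n)
    (hp : p ∈ Icc x0 x1 ×ˢ Icc y0 y1) :
    |S p - Lb S x0 x1 y0 y1 p| ≤ 36 * (C0 * (n^2)⁻¹) := by
  have h := err2d hbS.1 hx hy
    (fun q hq => hbS.2 2 0 (by norm_num) q (hsub hq))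
    (fun q hq => hbS.2 0 2 (by norm_num) q (hsub hq)) hp
  refine h.trans ?_
  have h9 : (3 / n)^2 = 9 * (n^2)⁻¹ := by rw [div_pow]; ring
  have e1 : (x1 - x0)^2 ≤ 9 * (n^2)⁻¹ := by rw [← h9]; exact sqb (by linarith) hwx
  have e2 : (y1 - y0)^2 ≤ 9 * (n^2)⁻¹ := by rw [← h9]; exact sqb (by linarith) hwy
  nlinarith [mul_le_mul_of_nonneg_left e1 hC0.le, mul_le_mul_of_nonneg_left e2 hC0.le]

lemma compStab {g : ℝ × ℝ → ℝ} {M : ℝ} (hx : x0 < x1) (hy : y0 < y1)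
    (hg : ∀ q ∈ Icc x0 x1 ×ˢ Icc y0 y1, |g q| ≤ M)
    (hp : p ∈ Icc x0 x1 ×ˢ Icc y0 y1) :
    |g p - Lb g x0 x1 y0 y1 p| ≤ 2 * M := stab2d hx hy hg hp

lemma compFineE1 {E1 : ℝ × ℝ → ℝ} (hC0 : 0 < C0) (hε0 : 0 < ε) (hβ0 : 0 < β)
    (hbE1 : BoundE1 ε β C0 E1) (hn : 0 < n) (hx : x0 < x1) (hy : y0 < y1)
    (hsub : Icc x0 x1 ×ˢ Icc y0 y1 ⊆ UnitSq)
    (hwx : x1 - x0 = 5 * ε * L / (β * n)) (hwy : y1 - y0 ≤ 3 / n)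
    (hp : p ∈ Icc x0 x1 ×ˢ Icc y0 y1) :
    |E1 p - Lb E1 x0 x1 y0 y1 p| ≤ (50 / β^2 * L^2 + 18) * (C0 * (n^2)⁻¹) := by
  have hexp1 : ∀ q : ℝ × ℝ, q ∈ UnitSq → Real.exp (-β * (1 - q.1) / ε) ≤ 1 := by
    intro q hq
    rw [Real.exp_le_one_iff]
    apply div_nonpos_of_nonpos_of_nonneg _ hε0.le
    nlinarith [hq.1.2]
  have hrε2 : ε ^ (-((2:ℕ):ℝ)) = (ε^(2:ℕ))⁻¹ := by
    rw [Real.rpow_neg hε0.le, Real.rpow_natCast]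
  have h := err2d (Mx := C0 * (ε^(2:ℕ))⁻¹) (My := C0) hbE1.1 hx hy
    (fun q hq => by
      have hb := hbE1.2 2 0 (by norm_num) q (hsub hq)
      rw [hrε2] at hb
      refine hb.trans ?_
      have h1 := hexp1 q (hsub hq)
      have h0 : (0:ℝ) ≤ C0 * (ε^(2:ℕ))⁻¹ := by positivity
      nlinarith)
    (fun q hq => by
      have hb := hbE1.2 0 2 (by norm_num) q (hsub hq)
      simp only [Nat.cast_zero, neg_zero, Real.rpow_zero, mul_one] at hb
      refine hb.trans ?_
      nlinarith [hexp1 q (hsub hq)]) hp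
  refine h.trans ?_
  have eq1 : 2 * (C0 * (ε^(2:ℕ))⁻¹) * (x1 - x0)^2 = 50 / β^2 * L^2 * (C0 * (n^2)⁻¹) := by
    rw [hwx]
    field_simp
    ring
  have h9 : (3 / n)^2 = 9 * (n^2)⁻¹ := by rw [div_pow]; ring
  have e2 : (y1 - y0)^2 ≤ 9 * (n^2)⁻¹ := by rw [← h9]; exact sqb (by linarith) hwy
  have eq2 : 2 * C0 * (y1 - y0)^2 ≤ 18 * (C0 * (n^2)⁻¹) := by
    nlinarith [mul_le_mul_of_nonneg_left e2 hC0.le]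
  nlinarith [eq1, eq2]

lemma compFineE2 {E2 : ℝ × ℝ → ℝ} (hC0 : 0 < C0) (hε0 : 0 < ε)
    (hbE2 : BoundE2 ε C0 E2) (hn : 0 < n) (hx : x0 < x1) (hy : y0 < y1)
    (hsub : Icc x0 x1 ×ˢ Icc y0 y1 ⊆ UnitSq)
    (hwx : x1 - x0 ≤ 3 / n) (hwy : y1 - y0 = 7.5 * Real.sqrt ε * L / n)
    (hp : p ∈ Icc x0 x1 ×ˢ Icc y0 y1) :
    |E2 p - Lb E2 x0 x1 y0 y1 p| ≤ (225 * L^2 + 36) * (C0 * (n^2)⁻¹) := by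
  have hsε : 0 < Real.sqrt ε := Real.sqrt_pos.2 hε0
  have hexpy1 : ∀ t : ℝ, 0 ≤ t → Real.exp (-t / Real.sqrt ε) ≤ 1 := by
    intro t ht
    rw [Real.exp_le_one_iff]
    apply div_nonpos_of_nonpos_of_nonneg (by linarith) hsε.le
  have hsum : ∀ q : ℝ × ℝ, q ∈ UnitSq →
      Real.exp (-q.2 / Real.sqrt ε) + Real.exp (-(1 - q.2) / Real.sqrt ε) ≤ 2 := by
    intro q hq
    have h1 := hexpy1 q.2 hq.2.1
    have h2 := hexpy1 (1 - q.2) (by linarith [hq.2.2])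
    linarith
  have hrε1 : ε ^ (-((2:ℕ):ℝ)/2) = ε⁻¹ := by
    rw [show (-((2:ℕ):ℝ)/2) = -((1:ℕ):ℝ) by norm_num, Real.rpow_neg hε0.le,
      Real.rpow_natCast, pow_one]
  have h := err2d (Mx := 2 * C0) (My := 2 * (C0 * ε⁻¹)) hbE2.1 hx hy
    (fun q hq => by
      have hb := hbE2.2 2 0 (by norm_num) q (hsub hq)
      simp only [Nat.cast_zero, neg_zero, zero_div, Real.rpow_zero, mul_one] at hb
      refine hb.trans ?_
      nlinarith [hsum q (hsub hq), Real.exp_pos (-q.2 / Real.sqrt ε),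
        Real.exp_pos (-(1 - q.2) / Real.sqrt ε)])
    (fun q hq => by
      have hb := hbE2.2 0 2 (by norm_num) q (hsub hq)
      rw [hrε1] at hb
      refine hb.trans ?_
      have h0 : (0:ℝ) < C0 * ε⁻¹ := by positivity
      nlinarith [hsum q (hsub hq), Real.exp_pos (-q.2 / Real.sqrt ε),
        Real.exp_pos (-(1 - q.2) / Real.sqrt ε)]) hp
  refine h.trans ?_
  have h9 : (3 / n)^2 = 9 * (n^2)⁻¹ := by rw [div_pow]; ring
  have e1 : (x1 - x0)^2 ≤ 9 * (n^2)⁻¹ := by rw [← h9]; exact sqb (by linarith) hwx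
  have eq1 : 2 * (2 * C0) * (x1 - x0)^2 ≤ 36 * (C0 * (n^2)⁻¹) := by
    nlinarith [mul_le_mul_of_nonneg_left e1 hC0.le]
  have eq2 : 2 * (2 * (C0 * ε⁻¹)) * (y1 - y0)^2 = 225 * L^2 * (C0 * (n^2)⁻¹) := by
    have hsq : Real.sqrt ε ^ 2 = ε := Real.sq_sqrt hε0.le
    have hεne : ε ≠ 0 := ne_of_gt hε0
    have hnne : n ≠ 0 := ne_of_gt hn
    have hp2 : (7.5 * Real.sqrt ε * L / n)^2 = 56.25 * ε * L^2 / n^2 := by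
      rw [div_pow, mul_pow, mul_pow, hsq]; norm_num
    rw [hwy, hp2]
    field_simp
    ring
  nlinarith [eq1, eq2]

lemma compFineE12 {E12 : ℝ × ℝ → ℝ} (hC0 : 0 < C0) (hε0 : 0 < ε) (hβ0 : 0 < β)
    (hbE12 : BoundE12 ε β C0 E12) (hn : 0 < n) (hx : x0 < x1) (hy : y0 < y1)
    (hsub : Icc x0 x1 ×ˢ Icc y0 y1 ⊆ UnitSq)
    (hwx : x1 - x0 = 5 * ε * L / (β * n)) (hwy : y1 - y0 = 7.5 * Real.sqrt ε * L / n)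
    (hp : p ∈ Icc x0 x1 ×ˢ Icc y0 y1) :
    |E12 p - Lb E12 x0 x1 y0 y1 p| ≤ (100 / β^2 + 225) * L^2 * (C0 * (n^2)⁻¹) := by
  have hsε : 0 < Real.sqrt ε := Real.sqrt_pos.2 hε0
  have hexp1 : ∀ q : ℝ × ℝ, q ∈ UnitSq → Real.exp (-β * (1 - q.1) / ε) ≤ 1 := by
    intro q hq
    rw [Real.exp_le_one_iff]
    apply div_nonpos_of_nonpos_of_nonneg _ hε0.le
    nlinarith [hq.1.2]
  have hexpy1 : ∀ t : ℝ, 0 ≤ t → Real.exp (-t / Real.sqrt ε) ≤ 1 := by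
    intro t ht
    rw [Real.exp_le_one_iff]
    apply div_nonpos_of_nonpos_of_nonneg (by linarith) hsε.le
  have hsum : ∀ q : ℝ × ℝ, q ∈ UnitSq →
      Real.exp (-q.2 / Real.sqrt ε) + Real.exp (-(1 - q.2) / Real.sqrt ε) ≤ 2 := by
    intro q hq
    have h1 := hexpy1 q.2 hq.2.1
    have h2 := hexpy1 (1 - q.2) (by linarith [hq.2.2])
    linarith
  have hr12x : ε ^ (-(((2:ℕ):ℝ) + ((0:ℕ):ℝ)/2)) = (ε^(2:ℕ))⁻¹ := by
    rw [show (-(((2:ℕ):ℝ) + ((0:ℕ):ℝ)/2)) = -((2:ℕ):ℝ) by norm_num,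
      Real.rpow_neg hε0.le, Real.rpow_natCast]
  have hr12y : ε ^ (-(((0:ℕ):ℝ) + ((2:ℕ):ℝ)/2)) = ε⁻¹ := by
    rw [show (-(((0:ℕ):ℝ) + ((2:ℕ):ℝ)/2)) = -((1:ℕ):ℝ) by norm_num,
      Real.rpow_neg hε0.le, Real.rpow_natCast, pow_one]
  have h := err2d (Mx := 2 * (C0 * (ε^(2:ℕ))⁻¹)) (My := 2 * (C0 * ε⁻¹)) hbE12.1 hx hy
    (fun q hq => by
      have hb := hbE12.2 2 0 (by norm_num) q (hsub hq)
      rw [hr12x] at hb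
      refine hb.trans ?_
      have h1 := hexp1 q (hsub hq)
      have h2 := hsum q (hsub hq)
      have h3 := Real.exp_pos (-β * (1 - q.1) / ε)
      have h0 : (0:ℝ) < C0 * (ε^(2:ℕ))⁻¹ := by positivity
      have m1 : (0:ℝ) ≤ C0 * (ε^(2:ℕ))⁻¹ * Real.exp (-β * (1 - q.1) / ε) := by positivity
      nlinarith [mul_le_mul_of_nonneg_left h2 m1, mul_le_mul_of_nonneg_left h1 h0.le])
    (fun q hq => by
      have hb := hbE12.2 0 2 (by norm_num) q (hsub hq)
      rw [hr12y] at hb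
      refine hb.trans ?_
      have h1 := hexp1 q (hsub hq)
      have h2 := hsum q (hsub hq)
      have h3 := Real.exp_pos (-β * (1 - q.1) / ε)
      have h0 : (0:ℝ) < C0 * ε⁻¹ := by positivity
      have m1 : (0:ℝ) ≤ C0 * ε⁻¹ * Real.exp (-β * (1 - q.1) / ε) := by positivity
      nlinarith [mul_le_mul_of_nonneg_left h2 m1, mul_le_mul_of_nonneg_left h1 h0.le]) hp
  refine h.trans ?_
  have eq1 : 2 * (2 * (C0 * (ε^(2:ℕ))⁻¹)) * (x1 - x0)^2
      = 100 / β^2 * L^2 * (C0 * (n^2)⁻¹) := by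
    rw [hwx]
    field_simp
    ring
  have eq2 : 2 * (2 * (C0 * ε⁻¹)) * (y1 - y0)^2 = 225 * L^2 * (C0 * (n^2)⁻¹) := by
    have hsq : Real.sqrt ε ^ 2 = ε := Real.sq_sqrt hε0.le
    have hεne : ε ≠ 0 := ne_of_gt hε0
    have hnne : n ≠ 0 := ne_of_gt hn
    have hp2 : (7.5 * Real.sqrt ε * L / n)^2 = 56.25 * ε * L^2 / n^2 := by
      rw [div_pow, mul_pow, mul_pow, hsq]; norm_num
    rw [hwy, hp2]
    field_simp
    ring
  nlinarith [eq1, eq2]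

end Comp

lemma final_arith {β T L : ℝ} (hβ : 0 < β) (hT : 0 < T) (hL : 1 ≤ L) :
    36 * T + (50 / β^2 * L^2 + 20) * T + (225 * L^2 + 40) * T
      + ((100 / β^2 + 225) * L^2 + 4) * T ≤ (1000 + 1000 / β^2) * T * L^2 := by
  have h2 : (1:ℝ) ≤ L^2 := by nlinarith
  have k : (0:ℝ) < 1 / β^2 := by positivity
  have k1 : 0 ≤ T * L^2 - T := by nlinarith
  have k2 : 0 ≤ 1 / β^2 * (T * L^2) := by positivity
  have e1 : 50 / β^2 * L^2 * T = 50 * (1 / β^2 * (T * L^2)) := by ring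
  have e2 : 100 / β^2 * L^2 * T = 100 * (1 / β^2 * (T * L^2)) := by ring
  have e3 : 1000 / β^2 * T * L^2 = 1000 * (1 / β^2 * (T * L^2)) := by ring
  nlinarith [k1, k2]

set_option maxHeartbeats 2000000 in
/-- Interpolation error: `‖u − u^I‖_{L^∞(τ)} ≤ C N⁻²` if `τ ⊆ Ω_s`, and
`‖u − u^I‖_{L^∞(τ)} ≤ C N⁻² ln² N` otherwise, with `C` independent of `ε` and `N`. -/
theorem interpolation_error_Linf (β C0 : ℝ) (hβ : 0 < β) (hC0 : 0 < C0) :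
    ∃ C : ℝ, 0 < C ∧
      ∀ (N : ℕ) (ε lx ly : ℝ) (S E1 E2 E12 u uI : ℝ × ℝ → ℝ),
        ShishkinHyp N ε β lx ly →
        BoundS C0 S → BoundE1 ε β C0 E1 → BoundE2 ε C0 E2 → BoundE12 ε β C0 E12 →
        (∀ p : ℝ × ℝ, u p = S p + E1 p + E2 p + E12 p) →
        IsMeshInterpolant N lx ly u uI →
        ∀ i j : ℕ, 1 ≤ i → i ≤ N → 1 ≤ j → j ≤ N →
          (meshRect N lx ly i j ⊆ OmegaS lx ly →
            ∀ p ∈ meshRect N lx ly i j, |u p - uI p| ≤ C * (N : ℝ) ^ (-(2 : ℝ))) ∧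
          (∀ p ∈ meshRect N lx ly i j,
            |u p - uI p| ≤ C * (N : ℝ) ^ (-(2 : ℝ)) * Real.log (N : ℝ) ^ 2) := by
  refine ⟨C0 * (1000 + 1000 / β ^ 2), by positivity, ?_⟩
  intro N ε lx ly S E1 E2 E12 u uI hSh hbS hbE1 hbE2 hbE12 hu hI i j hi1 hiN hj1 hjN
  obtain ⟨hN0, hdvd, hε0, hεN, hβ0, hlxe, hlye, hlxh, hlyh⟩ := hSh
  obtain ⟨m, hm⟩ := hdvd
  have hm1 : 1 ≤ m := by omega
  have hN6 : 6 ≤ N := by omega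
  have hnR : (6:ℝ) ≤ (N:ℝ) := by exact_mod_cast hN6
  have hn0 : (0:ℝ) < (N:ℝ) := by linarith
  have hn1 : (1:ℝ) ≤ (N:ℝ) := by linarith
  have hL1 : 1 ≤ Real.log (N:ℝ) := by
    rw [Real.le_log_iff_exp_le hn0]
    calc Real.exp 1 ≤ 2.7182818286 := Real.exp_one_lt_d9.le
    _ ≤ (N:ℝ) := by linarith
  have hL0 : (0:ℝ) < Real.log (N:ℝ) := by linarith
  have hsε : 0 < Real.sqrt ε := Real.sqrt_pos.2 hε0
  have hlx0 : 0 < lx := by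
    rw [hlxe]; exact mul_pos (div_pos (by nlinarith) hβ0) hL0
  have hly0 : 0 < ly := by
    rw [hlye]; exact mul_pos (by nlinarith) hL0
  have hrpow2 : (N:ℝ) ^ (-(2:ℝ)) = (((N:ℝ))^(2:ℕ))⁻¹ := by
    rw [show (-(2:ℝ)) = -((2:ℕ):ℝ) by norm_num, Real.rpow_neg hn0.le, Real.rpow_natCast]
  have hA0 : (0:ℝ) < (((N:ℝ))^(2:ℕ))⁻¹ := by positivity
  have hexpN : Real.exp (-(2.5 * Real.log (N:ℝ))) ≤ (((N:ℝ))^(2:ℕ))⁻¹ := by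
    have e1 : Real.exp (-(2.5 * Real.log (N:ℝ))) = (N:ℝ) ^ (-(2.5:ℝ)) := by
      rw [Real.rpow_def_of_pos hn0]; congr 1; ring
    rw [e1, ← hrpow2]
    exact Real.rpow_le_rpow_of_exponent_le hn1 (by norm_num)
  -- geometry
  set x0 := meshX N lx (i-1) with hx0d
  set x1 := meshX N lx i with hx1d
  set y0 := meshY N ly (j-1) with hy0d
  set y1 := meshY N ly j with hy1d
  have hR : meshRect N lx ly i j = Icc x0 x1 ×ˢ Icc y0 y1 := rfl
  have Hx : (x0 < x1 ∧ 0 ≤ x0 ∧ x1 ≤ 1 ∧ x1 - x0 ≤ 3 / (N:ℝ)) ∧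
      (x1 ≤ 1 - lx ∨ x1 - x0 = 2 * lx / (N:ℝ)) := by
    rcases le_or_gt i (N / 2) with hic | hic
    · obtain ⟨h1, h2, h3, h4⟩ := xfacts_coarse hm hm1 hlx0 hlxh hi1 hic
      refine ⟨⟨h1, h2, by linarith, ?_⟩, Or.inl h3⟩
      rw [h4]; rw [div_le_div_iff₀ hn0 hn0]; nlinarith
    · obtain ⟨h1, h2, h3, h4⟩ := xfacts_fine hm hm1 hlx0 hlxh hic hiN
      refine ⟨⟨h1, by linarith, h3, ?_⟩, Or.inr h4⟩
      rw [h4]; rw [div_le_div_iff₀ hn0 hn0]; nlinarith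
  have Hy : (y0 < y1 ∧ 0 ≤ y0 ∧ y1 ≤ 1 ∧ y1 - y0 ≤ 3 / (N:ℝ)) ∧
      ((ly ≤ y0 ∧ y1 ≤ 1 - ly) ∨ y1 - y0 = 3 * ly / (N:ℝ)) := by
    rcases le_or_gt j (N / 3) with hjc | hjc
    · obtain ⟨h1, h2, h3, h4⟩ := yfacts_low hm hm1 hly0 hlyh hj1 hjc
      refine ⟨⟨h1, h2, by linarith, ?_⟩, Or.inr h4⟩
      rw [h4]; rw [div_le_div_iff₀ hn0 hn0]; nlinarith
    · rcases le_or_gt j (2 * N / 3) with hjc2 | hjc2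
      · obtain ⟨h1, h2, h3, h4⟩ := yfacts_mid hm hm1 hly0 hlyh hjc hjc2
        refine ⟨⟨h1, by linarith, by linarith, ?_⟩, Or.inl ⟨h2, h3⟩⟩
        rw [h4]; rw [div_le_div_iff₀ hn0 hn0]; nlinarith
      · obtain ⟨h1, h2, h3, h4⟩ := yfacts_high hm hm1 hly0 hlyh hjc2 hjN
        refine ⟨⟨h1, by linarith, h3, ?_⟩, Or.inr h4⟩
        rw [h4]; rw [div_le_div_iff₀ hn0 hn0]; nlinarith
  obtain ⟨⟨hxlt, hx00, hx11, hxw⟩, Hx2⟩ := Hx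
  obtain ⟨⟨hylt, hy00, hy11, hyw⟩, Hy2⟩ := Hy
  have hsub : Icc x0 x1 ×ˢ Icc y0 y1 ⊆ UnitSq := by
    rintro ⟨qx, qy⟩ ⟨⟨ha, hb⟩, hc, hd⟩
    exact ⟨⟨by linarith, by linarith⟩, ⟨by linarith, by linarith⟩⟩
  -- decomposition of the error
  have hdiff : ∀ p ∈ Icc x0 x1 ×ˢ Icc y0 y1,
      u p - uI p = (S p - Lb S x0 x1 y0 y1 p) + (E1 p - Lb E1 x0 x1 y0 y1 p)
        + (E2 p - Lb E2 x0 x1 y0 y1 p) + (E12 p - Lb E12 x0 x1 y0 y1 p) := by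
    intro p hp
    have hbil := hI.2.1 i j hi1 hiN hj1 hjN
    rw [IsBilinearOn, hR] at hbil
    have h00 := hI.2.2 (i-1) (j-1) (by omega) (by omega)
    have h10 := hI.2.2 i (j-1) hiN (by omega)
    have h01 := hI.2.2 (i-1) j (by omega) hjN
    have h11 := hI.2.2 i j hiN hjN
    have huI : uI p = Lb u x0 x1 y0 y1 p :=
      interpolant_eq_Lb hxlt hylt hbil h00 h10 h01 h11 hp
    rw [huI, Lb_add4 S E1 E2 E12 u hu, hu p]
    ring
  -- pointwise exponential bounds on the rectangle
  have hexpxA : ∀ q : ℝ × ℝ, x1 ≤ 1 - lx → q ∈ Icc x0 x1 ×ˢ Icc y0 y1 →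
      Real.exp (-β * (1 - q.1) / ε) ≤ ((N:ℝ)^(2:ℕ))⁻¹ := by
    intro q hx1lx hq
    refine le_trans (Real.exp_le_exp.2 ?_) hexpN
    rw [div_le_iff₀ hε0]
    have hq1 : q.1 ≤ 1 - lx := le_trans hq.1.2 hx1lx
    have hblx : β * lx = 2.5 * ε * Real.log (N:ℝ) := by
      rw [hlxe]; field_simp
    nlinarith
  have hexpysum : ∀ q : ℝ × ℝ, q ∈ UnitSq →
      Real.exp (-q.2 / Real.sqrt ε) + Real.exp (-(1 - q.2) / Real.sqrt ε) ≤ 2 := by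
    intro q hq
    have h1 : Real.exp (-q.2 / Real.sqrt ε) ≤ 1 := by
      rw [Real.exp_le_one_iff]
      apply div_nonpos_of_nonpos_of_nonneg (by linarith [hq.2.1]) hsε.le
    have h2 : Real.exp (-(1 - q.2) / Real.sqrt ε) ≤ 1 := by
      rw [Real.exp_le_one_iff]
      apply div_nonpos_of_nonpos_of_nonneg (by linarith [hq.2.2]) hsε.le
    linarith
  have hexpyA : ∀ q : ℝ × ℝ, (ly ≤ y0 ∧ y1 ≤ 1 - ly) → q ∈ Icc x0 x1 ×ˢ Icc y0 y1 →
      Real.exp (-q.2 / Real.sqrt ε) + Real.exp (-(1 - q.2) / Real.sqrt ε)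
        ≤ 2 * ((N:ℝ)^(2:ℕ))⁻¹ := by
    intro q hmid hq
    have hlysε : ly / Real.sqrt ε = 2.5 * Real.log (N:ℝ) := by
      rw [hlye]; field_simp
    have hq2a : ly ≤ q.2 := le_trans hmid.1 hq.2.1
    have hq2b : ly ≤ 1 - q.2 := by linarith [hq.2.2, hmid.2]
    have k1 : Real.exp (-q.2 / Real.sqrt ε) ≤ ((N:ℝ)^(2:ℕ))⁻¹ := by
      refine le_trans (Real.exp_le_exp.2 ?_) hexpN
      rw [← hlysε, ← neg_div]
      exact (div_le_div_iff_of_pos_right hsε).2 (by linarith)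
    have k2 : Real.exp (-(1 - q.2) / Real.sqrt ε) ≤ ((N:ℝ)^(2:ℕ))⁻¹ := by
      refine le_trans (Real.exp_le_exp.2 ?_) hexpN
      rw [← hlysε, ← neg_div]
      exact (div_le_div_iff_of_pos_right hsε).2 (by linarith)
    linarith
  -- stability sup-bounds
  have supE1 : x1 ≤ 1 - lx → ∀ q ∈ Icc x0 x1 ×ˢ Icc y0 y1,
      |E1 q| ≤ C0 * ((N:ℝ)^(2:ℕ))⁻¹ := by
    intro hx1lx q hq
    have hb := hbE1.2 0 0 (by norm_num) q (hsub hq)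
    rw [show pd 0 0 E1 = E1 from rfl] at hb
    simp only [Nat.cast_zero, neg_zero, Real.rpow_zero, mul_one] at hb
    refine hb.trans ?_
    exact mul_le_mul_of_nonneg_left (hexpxA q hx1lx hq) hC0.le
  have supE2 : (ly ≤ y0 ∧ y1 ≤ 1 - ly) → ∀ q ∈ Icc x0 x1 ×ˢ Icc y0 y1,
      |E2 q| ≤ 2 * (C0 * ((N:ℝ)^(2:ℕ))⁻¹) := by
    intro hmid q hq
    have hb := hbE2.2 0 0 (by norm_num) q (hsub hq)
    rw [show pd 0 0 E2 = E2 from rfl] at hb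
    simp only [Nat.cast_zero, neg_zero, zero_div, Real.rpow_zero, mul_one] at hb
    refine hb.trans ?_
    nlinarith [hexpyA q hmid hq]
  have supE12x : x1 ≤ 1 - lx → ∀ q ∈ Icc x0 x1 ×ˢ Icc y0 y1,
      |E12 q| ≤ 2 * (C0 * ((N:ℝ)^(2:ℕ))⁻¹) := by
    intro hx1lx q hq
    have hb := hbE12.2 0 0 (by norm_num) q (hsub hq)
    rw [show pd 0 0 E12 = E12 from rfl] at hb
    simp only [Nat.cast_zero, zero_div, add_zero, neg_zero, Real.rpow_zero, mul_one,
      one_mul] at hb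
    refine hb.trans ?_
    have h1 := hexpxA q hx1lx hq
    have h2 := hexpysum q (hsub hq)
    have h3 := (Real.exp_pos (-β * (1 - q.1) / ε)).le
    have h4 : (0:ℝ) ≤ Real.exp (-q.2 / Real.sqrt ε) + Real.exp (-(1 - q.2) / Real.sqrt ε) := by
      positivity
    have m1 : (0:ℝ) ≤ C0 * Real.exp (-β * (1 - q.1) / ε) := by positivity
    nlinarith [mul_le_mul_of_nonneg_left h2 m1, mul_le_mul_of_nonneg_left h1 (by positivity : (0:ℝ) ≤ 2 * C0)]
  have supE12y : (ly ≤ y0 ∧ y1 ≤ 1 - ly) → ∀ q ∈ Icc x0 x1 ×ˢ Icc y0 y1,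
      |E12 q| ≤ 2 * (C0 * ((N:ℝ)^(2:ℕ))⁻¹) := by
    intro hmid q hq
    have hb := hbE12.2 0 0 (by norm_num) q (hsub hq)
    rw [show pd 0 0 E12 = E12 from rfl] at hb
    simp only [Nat.cast_zero, zero_div, add_zero, neg_zero, Real.rpow_zero, mul_one,
      one_mul] at hb
    refine hb.trans ?_
    have h1 : Real.exp (-β * (1 - q.1) / ε) ≤ 1 := by
      rw [Real.exp_le_one_iff]
      apply div_nonpos_of_nonpos_of_nonneg _ hε0.le
      have := (hsub hq).1.2
      nlinarith
    have h2 := hexpyA q hmid hq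
    have h3 := (Real.exp_pos (-β * (1 - q.1) / ε)).le
    have h4 : (0:ℝ) ≤ Real.exp (-q.2 / Real.sqrt ε) + Real.exp (-(1 - q.2) / Real.sqrt ε) := by
      positivity
    have m1 : (0:ℝ) ≤ C0 * Real.exp (-β * (1 - q.1) / ε) := by positivity
    nlinarith [mul_le_mul_of_nonneg_left h2 m1,
      mul_le_mul_of_nonneg_left h1 (by positivity : (0:ℝ) ≤ 2 * (C0 * ((N:ℝ)^(2:ℕ))⁻¹))]
  -- the S component
  have bS : ∀ p ∈ Icc x0 x1 ×ˢ Icc y0 y1,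
      |S p - Lb S x0 x1 y0 y1 p| ≤ 36 * (C0 * ((N:ℝ)^(2:ℕ))⁻¹) :=
    fun p hp => compS hC0 hbS hn0 hxlt hylt hsub hxw hyw hp
  -- fine widths in convenient form
  have hwx5 : x1 - x0 = 2 * lx / (N:ℝ) → x1 - x0 = 5 * ε * Real.log (N:ℝ) / (β * (N:ℝ)) := by
    intro h
    rw [h, hlxe]
    field_simp
    ring
  have hwy5 : y1 - y0 = 3 * ly / (N:ℝ) →
      y1 - y0 = 7.5 * Real.sqrt ε * Real.log (N:ℝ) / (N:ℝ) := by
    intro h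
    rw [h, hlye]
    ring
  have habs4 : ∀ a b c d : ℝ, |a + b + c + d| ≤ |a| + |b| + |c| + |d| := by
    intro a b c d
    calc |a + b + c + d| ≤ |a + b + c| + |d| := abs_add_le _ _
    _ ≤ (|a + b| + |c|) + |d| := by linarith [abs_add_le (a + b) c]
    _ ≤ ((|a| + |b|) + |c|) + |d| := by linarith [abs_add_le a b]
    _ = |a| + |b| + |c| + |d| := by ring
  constructor
  · -- τ ⊆ Ω_s : sharper bound
    intro hΩ p hp
    rw [hR] at hΩ hp
    have hc1 := hΩ (⟨⟨hxlt.le, le_refl _⟩, ⟨hylt.le, le_refl _⟩⟩ :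
      (x1, y1) ∈ Icc x0 x1 ×ˢ Icc y0 y1)
    have hc0 := hΩ (⟨⟨le_refl _, hxlt.le⟩, ⟨le_refl _, hylt.le⟩⟩ :
      (x0, y0) ∈ Icc x0 x1 ×ˢ Icc y0 y1)
    have hx1lx : x1 ≤ 1 - lx := hc1.1.2
    have hmid : ly ≤ y0 ∧ y1 ≤ 1 - ly := ⟨hc0.2.1, hc1.2.2⟩
    have s1 := compStab hxlt hylt (supE1 hx1lx) hp
    have s2 := compStab hxlt hylt (supE2 hmid) hp
    have s3 := compStab hxlt hylt (supE12x hx1lx) hp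
    have s0 := bS p hp
    rw [hrpow2, hdiff p hp]
    refine (habs4 _ _ _ _).trans ?_
    have hq1 : (0:ℝ) ≤ 1000 / β^2 := by positivity
    nlinarith [mul_pos hC0 hA0]
  · -- general bound
    intro p hp
    rw [hR] at hp
    have b1 : |E1 p - Lb E1 x0 x1 y0 y1 p|
        ≤ (50 / β^2 * Real.log (N:ℝ)^2 + 20) * (C0 * ((N:ℝ)^(2:ℕ))⁻¹) := by
      rcases Hx2 with hx1lx | hwx2
      · have h := compStab hxlt hylt (supE1 hx1lx) hp
        refine h.trans ?_
        have : (0:ℝ) ≤ 50 / β^2 * Real.log (N:ℝ)^2 := by positivity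
        nlinarith [mul_pos hC0 hA0]
      · have h := compFineE1 hC0 hε0 hβ0 hbE1 hn0 hxlt hylt hsub (hwx5 hwx2) hyw hp
        refine h.trans ?_
        nlinarith [mul_pos hC0 hA0]
    have b2 : |E2 p - Lb E2 x0 x1 y0 y1 p|
        ≤ (225 * Real.log (N:ℝ)^2 + 40) * (C0 * ((N:ℝ)^(2:ℕ))⁻¹) := by
      rcases Hy2 with hmid | hwy2
      · have h := compStab hxlt hylt (supE2 hmid) hp
        refine h.trans ?_
        have : (0:ℝ) ≤ 225 * Real.log (N:ℝ)^2 := by positivity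
        nlinarith [mul_pos hC0 hA0]
      · have h := compFineE2 hC0 hε0 hbE2 hn0 hxlt hylt hsub hxw (hwy5 hwy2) hp
        refine h.trans ?_
        nlinarith [mul_pos hC0 hA0]
    have b12 : |E12 p - Lb E12 x0 x1 y0 y1 p|
        ≤ ((100 / β^2 + 225) * Real.log (N:ℝ)^2 + 4) * (C0 * ((N:ℝ)^(2:ℕ))⁻¹) := by
      have hnn : (0:ℝ) ≤ (100 / β^2 + 225) * Real.log (N:ℝ)^2 := by positivity
      rcases Hx2 with hx1lx | hwx2
      · have h := compStab hxlt hylt (supE12x hx1lx) hp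
        refine h.trans ?_
        nlinarith [mul_pos hC0 hA0]
      · rcases Hy2 with hmid | hwy2
        · have h := compStab hxlt hylt (supE12y hmid) hp
          refine h.trans ?_
          nlinarith [mul_pos hC0 hA0]
        · have h := compFineE12 hC0 hε0 hβ0 hbE12 hn0 hxlt hylt hsub
            (hwx5 hwx2) (hwy5 hwy2) hp
          refine h.trans ?_
          nlinarith [mul_pos hC0 hA0]
    have b0 := bS p hp
    rw [hrpow2, hdiff p hp]
    have hsum := add_le_add (add_le_add (add_le_add b0 b1) b2) b12
    refine ((habs4 _ _ _ _).trans hsum).trans ?_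
    refine le_trans (final_arith hβ0 (mul_pos hC0 hA0) hL1) (le_of_eq ?_)
    ring
end
end
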